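/- arXiv:2103.01911 — 5 statements merged into one kernel-verified Lean document; each statement's English description precedes it below -/
import Mathlib

section
/- Let A, H, B be atoms such that each of the two pairs A, H and B, H is linear (no variable occurs more than once in the pair A, H, and no variable occurs more than once in the pair B, H). If θ is a most general unifier of A and H, then the atom Bθ is linear. -/
/-! # First-order terms, substitutions, unification -/

inductive Term (F : Type) (V : Type) : Type
  | var : V → Term F V
  | app : F → List (Term F V) → Term F V

namespace Term

variable {F V : Type}

/-- The variable `v` occurs in the term. -/
inductive VarIn (v : V) : Term F V → Prop
  | var : VarIn v (Term.var v)
  | app {f : F} {ts : List (Term F V)} {t : Term F V} :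
      t ∈ ts → VarIn v t → VarIn v (Term.app f ts)

/-- A term is ground if it contains no variables. -/
def Ground (t : Term F V) : Prop := ∀ v, ¬ VarIn v t

/-- Application of a substitution (a map from variables to terms) to a term. -/
def subst (σ : V → Term F V) : Term F V → Term F V
  | var x => σ x
  | app f ts => app f (ts.attach.map fun ⟨t, _⟩ => t.subst σ)

/-- Number of occurrences of the variable `v` in a term. -/
def count [DecidableEq V] (v : V) : Term F V → ℕ
  | var x => if x = v then 1 else 0
  | app _ ts => (ts.attach.map fun ⟨t, _⟩ => t.count v).sum

/-- A term (or atom) is linear if no variable occurs in it more than once. -/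
def Linear [DecidableEq V] (t : Term F V) : Prop := ∀ v, count v t ≤ 1

def IsVar : Term F V → Prop
  | var _ => True
  | app _ _ => False

end Term

/-- A substitution. -/
abbrev Subst (F V : Type) := V → Term F V

/-- Composition of substitutions: `(σ.comp η)` is `ση`. -/
def Subst.comp {F V : Type} (σ η : Subst F V) : Subst F V := fun v => (σ v).subst η

/-- The substitution `{X/t}`. -/
def subst1 {F V : Type} [DecidableEq V] (X : V) (t : Term F V) : Subst F V :=
  fun v => if v = X then t else Term.var v

variable {F V : Type}

/-- `σ` unifies the two terms (or atoms) `A` and `H`. -/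
def IsUnifierPair (σ : Subst F V) (A H : Term F V) : Prop := A.subst σ = H.subst σ

/-- `σ` is a most general unifier of `A` and `H`. -/
def IsMGUPair (σ : Subst F V) (A H : Term F V) : Prop :=
  IsUnifierPair σ A H ∧ ∀ τ, IsUnifierPair τ A H → ∃ η, τ = σ.comp η

/-- An equation between terms. -/
abbrev Eqn (F V : Type) := Term F V × Term F V

/-- A set of equations. -/
abbrev EqSet (F V : Type) := Set (Eqn F V)

def Eqn.subst (σ : Subst F V) (e : Eqn F V) : Eqn F V := (e.1.subst σ, e.2.subst σ)

/-- `σ` is a unifier of the equation set `E`. -/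
def IsUnifier (σ : Subst F V) (E : EqSet F V) : Prop := ∀ e ∈ E, e.1.subst σ = e.2.subst σ

def Unifiable (E : EqSet F V) : Prop := ∃ σ, IsUnifier σ E

/-- `σ` is a most general unifier of the equation set `E`. -/
def IsMGU (σ : Subst F V) (E : EqSet F V) : Prop :=
  IsUnifier σ E ∧ ∀ τ, IsUnifier τ E → ∃ η, τ = σ.comp η

/-! # The Martelli–Montanari algorithm (MMA) and its occur-check-less version MMA⁻ -/

/-- The variable `X` occurs in the equation `e`. -/
def occursInEqn (X : V) (e : Eqn F V) : Prop := Term.VarIn X e.1 ∨ Term.VarIn X e.2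

/-- The variable `X` occurs in equations of `E` other than `e`. -/
def occursElsewhere (X : V) (e : Eqn F V) (E : EqSet F V) : Prop :=
  ∃ e' ∈ E, e' ≠ e ∧ occursInEqn X e'

/-- Action (2) of MMA is applicable: `E` contains a clash `f(s₁,…,sₘ) = g(t₁,…,tₙ)`
(distinct function symbols; in a signature with arities, the same name with different
numbers of arguments also counts as distinct symbols). -/
def Clash (E : EqSet F V) : Prop :=
  ∃ f ss g ts, (Term.app f ss, Term.app g ts) ∈ E ∧ (f ≠ g ∨ ss.length ≠ ts.length)

/-- Action (6) of MMA (the occur-check failure) is applicable to `E`. -/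
def OccApplicable (E : EqSet F V) : Prop :=
  ∃ X t, (Term.var X, t) ∈ E ∧ Term.var X ≠ t ∧ Term.VarIn X t

/-- A (non-failing) step of MMA: actions (1), (3), (4), (5). -/
inductive MMAStep [DecidableEq V] : EqSet F V → EqSet F V → Prop
  | decomp {E : EqSet F V} {f : F} {ss ts : List (Term F V)} :
      (Term.app f ss, Term.app f ts) ∈ E → ss.length = ts.length →
      MMAStep E ((E \ {(Term.app f ss, Term.app f ts)}) ∪ {e | e ∈ ss.zip ts})
  | del {E : EqSet F V} {X : V} : (Term.var X, Term.var X) ∈ E →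
      MMAStep E (E \ {(Term.var X, Term.var X)})
  | orient {E : EqSet F V} {X : V} {t : Term F V} : (t, Term.var X) ∈ E → ¬ t.IsVar →
      MMAStep E ((E \ {(t, Term.var X)}) ∪ {(Term.var X, t)})
  | elim {E : EqSet F V} {X : V} {t : Term F V} :
      (Term.var X, t) ∈ E → Term.var X ≠ t → ¬ Term.VarIn X t →
      occursElsewhere X (Term.var X, t) E →
      MMAStep E (insert (Term.var X, t) (Eqn.subst (subst1 X t) '' (E \ {(Term.var X, t)})))

/-- `E'` is reachable from `E` by (non-failing) MMA steps. -/
def MMAReach [DecidableEq V] (E E' : EqSet F V) : Prop := Relation.ReflTransGen MMAStep E E'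

/-- `E` is not subject to occur-check: no run of MMA on `E` performs action (6),
i.e. action (6) is not applicable to any equation set reachable by MMA from `E`. -/
def NSTO [DecidableEq V] (E : EqSet F V) : Prop :=
  ∀ E', MMAReach E E' → ¬ OccApplicable E'

/-- A solved equation set: `X₁=t₁, …, Xₙ=tₙ` with `X₁,…,Xₙ` distinct variables
none of which occurs in any `tᵢ`. -/
def SolvedSet (E : EqSet F V) : Prop :=
  (∀ e ∈ E, ∃ X, e.1 = Term.var X) ∧
  (∀ e ∈ E, ∀ e' ∈ E, e.1 = e'.1 → e = e') ∧
  (∀ e ∈ E, ∀ e' ∈ E, ∀ X, e.1 = Term.var X → ¬ Term.VarIn X e'.2)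

/-- The relation `X ≻_E Y`: for some equation `X = t` of `E`, `Y ∈ Var(t)`. -/
def succRel (E : EqSet F V) (X Y : V) : Prop := ∃ t, (Term.var X, t) ∈ E ∧ Term.VarIn Y t

/-- A semi-solved equation set: `X₁=t₁, …, Xₙ=tₙ` with `X₁,…,Xₙ` distinct variables,
no `tᵢ` equal to `Xᵢ`, and whenever `Xᵢ` occurs in some `tₖ` then `Xᵢ ≻⁺_E Xᵢ`. -/
def SemiSolved (E : EqSet F V) : Prop :=
  (∀ e ∈ E, ∃ X, e.1 = Term.var X) ∧
  (∀ e ∈ E, ∀ e' ∈ E, e.1 = e'.1 → e = e') ∧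
  (∀ e ∈ E, e.1 ≠ e.2) ∧
  (∀ X, (∃ e' ∈ E, Term.VarIn X e'.2) → (∃ t, (Term.var X, t) ∈ E) →
    Relation.TransGen (succRel E) X X)

/-- `σ` is the substitution represented by the (solved) equation set `E`. -/
def Represents (E : EqSet F V) (σ : Subst F V) : Prop :=
  ∀ v, (∃ t, (Term.var v, t) ∈ E ∧ σ v = t) ∨ ((∀ t, (Term.var v, t) ∉ E) ∧ σ v = Term.var v)

/-- There is an occur-check free run of MMA on `E`: a maximal run never performing
action (6), hence ending either by action (2) (failure on a clash) or with success
(no action applicable any more, the final set being solved). (MMA always terminates,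
so runs are finite.) -/
def ExistsOCFreeRun [DecidableEq V] (E : EqSet F V) : Prop :=
  ∃ E', MMAReach E E' ∧ (Clash E' ∨ SolvedSet E')

/-- `u` is obtained from `s` by replacing *some* of the occurrences of the variable `X`
by the term `t`. -/
inductive ReplSome [DecidableEq V] (X : V) (t : Term F V) : Term F V → Term F V → Prop
  | keep (v : V) : ReplSome X t (Term.var v) (Term.var v)
  | repl : ReplSome X t (Term.var X) t
  | app {f : F} {ss ts : List (Term F V)} :
      List.Forall₂ (ReplSome X t) ss ts → ReplSome X t (Term.app f ss) (Term.app f ts)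

def ReplSomeEqn [DecidableEq V] (X : V) (t : Term F V) (e e' : Eqn F V) : Prop :=
  ReplSome X t e.1 e'.1 ∧ ReplSome X t e.2 e'.2

/-- The labels of the actions of MMA⁻. -/
inductive MLabel (F V : Type) where
  | decomp | del | orient
  | elim (X : V) (t : Term F V)
  | elim' (X : V) (t : Term F V)

/-- A configuration of MMA⁻: the current equation set together with the set of
variables on which action (5) has already been performed. -/
abbrev MState (F V : Type) := EqSet F V × Set V

/-- A (non-failing) step of MMA⁻, labelled by the action used: actions (1), (3), (4),
(5) (with condition `X ≠ t` instead of the occur-check `X ∉ Var(t)`), and (5')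
(replacing some occurrences of `X` by `t` in the other equations, allowed only if
action (5) has previously been performed on an equation with left-hand side `X`). -/
inductive MMStepL [DecidableEq V] : MLabel F V → MState F V → MState F V → Prop
  | decomp {E : EqSet F V} {H : Set V} {f : F} {ss ts : List (Term F V)} :
      (Term.app f ss, Term.app f ts) ∈ E → ss.length = ts.length →
      MMStepL MLabel.decomp (E, H)
        ((E \ {(Term.app f ss, Term.app f ts)}) ∪ {e | e ∈ ss.zip ts}, H)
  | del {E : EqSet F V} {H : Set V} {X : V} : (Term.var X, Term.var X) ∈ E →
      MMStepL MLabel.del (E, H) (E \ {(Term.var X, Term.var X)}, H)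
  | orient {E : EqSet F V} {H : Set V} {X : V} {t : Term F V} :
      (t, Term.var X) ∈ E → ¬ t.IsVar →
      MMStepL MLabel.orient (E, H) ((E \ {(t, Term.var X)}) ∪ {(Term.var X, t)}, H)
  | elim {E : EqSet F V} {H : Set V} {X : V} {t : Term F V} :
      (Term.var X, t) ∈ E → Term.var X ≠ t →
      occursElsewhere X (Term.var X, t) E →
      MMStepL (MLabel.elim X t) (E, H)
        (insert (Term.var X, t) (Eqn.subst (subst1 X t) '' (E \ {(Term.var X, t)})),
         insert X H)
  | elim' {E : EqSet F V} {H : Set V} {X : V} {t : Term F V} {g : Eqn F V → Eqn F V} :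
      (Term.var X, t) ∈ E → Term.var X ≠ t →
      occursElsewhere X (Term.var X, t) E → X ∈ H →
      (∀ e ∈ E \ {(Term.var X, t)}, ReplSomeEqn X t e (g e)) →
      MMStepL (MLabel.elim' X t) (E, H)
        (insert (Term.var X, t) (g '' (E \ {(Term.var X, t)})), H)

/-- A (non-failing) step of MMA⁻. -/
def MMStep [DecidableEq V] (s s' : MState F V) : Prop := ∃ l, MMStepL l s s'

/-- Reachability by (non-failing) steps of MMA⁻. A run of MMA⁻ on an equation set `E`
starts in the configuration `(E, ∅)`; it terminates with failure when action (2) is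
performed (a clash is present), and it may terminate with success when the current
equation set is semi-solved. -/
def MMReach [DecidableEq V] (s s' : MState F V) : Prop := Relation.ReflTransGen MMStep s s'


/-! ## Auxiliary development for Statement 2 -/

namespace Stmt2Aux

open Term

variable {F V : Type} [DecidableEq V]

/-- Custom induction principle for `Term`. -/
theorem term_ind {P : Term F V → Prop} (hv : ∀ v, P (Term.var v))
    (ha : ∀ f ts, (∀ t ∈ ts, P t) → P (Term.app f ts)) : ∀ t, P t
  | Term.var v => hv v
  | Term.app f ts => ha f ts fun t ht => term_ind hv ha t
termination_by t => sizeOf t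
decreasing_by
  have := List.sizeOf_lt_of_mem ht
  simp only [Term.app.sizeOf_spec]
  omega

theorem attach_flatMap {α β : Type _} (l : List α) (k : α → List β) :
    (l.attach.flatMap fun x => k x.1) = l.flatMap k := by
  simp only [List.flatMap, List.attach_map_val]

theorem map_eq_self' {α : Type _} {f : α → α} :
    ∀ {l : List α}, l.map f = l → ∀ a ∈ l, f a = a := by
  intro l
  induction l with
  | nil => simp
  | cons x xs ih =>
    intro h a ha
    simp only [List.map_cons, List.cons.injEq] at h
    rcases List.mem_cons.mp ha with rfl | ha
    · exact h.1
    · exact ih h.2 a ha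

theorem zip_map_eq {α β γ : Type _} {f : α → γ} {g : β → γ} :
    ∀ {l₁ : List α} {l₂ : List β}, l₁.map f = l₂.map g →
      ∀ p ∈ l₁.zip l₂, f p.1 = g p.2 := by
  intro l₁
  induction l₁ with
  | nil => simp
  | cons x xs ih =>
    intro l₂ h p hp
    cases l₂ with
    | nil => simp at hp
    | cons y ys =>
      simp only [List.map_cons, List.cons.injEq] at h
      simp only [List.zip_cons_cons, List.mem_cons] at hp
      rcases hp with rfl | hp
      · exact h.1
      · exact ih h.2 p hp

theorem map_eq_of_zip {α β γ : Type _} {f : α → γ} {g : β → γ} :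
    ∀ {l₁ : List α} {l₂ : List β}, l₁.length = l₂.length →
      (∀ p ∈ l₁.zip l₂, f p.1 = g p.2) → l₁.map f = l₂.map g := by
  intro l₁
  induction l₁ with
  | nil => intro l₂ h _; cases l₂ with
    | nil => rfl
    | cons y ys => simp at h
  | cons x xs ih =>
    intro l₂ h hp
    cases l₂ with
    | nil => simp at h
    | cons y ys =>
      simp only [List.length_cons, Nat.succ.injEq] at h
      simp only [List.map_cons]
      refine congrArg₂ _ (hp (x, y) (by simp)) (ih h ?_)
      intro p hmem; exact hp p (by simp [hmem])

theorem elem_le_sum {α : Type _} (f : α → ℕ) :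
    ∀ {l : List α}, ∀ a ∈ l, f a ≤ (l.map f).sum := by
  intro l
  induction l with
  | nil => simp
  | cons x xs ih =>
    intro a ha
    simp only [List.map_cons, List.sum_cons]
    rcases List.mem_cons.mp ha with rfl | ha
    · exact Nat.le_add_right _ _
    · exact (ih a ha).trans (Nat.le_add_left _ _)

theorem pair_le_sum {α : Type _} (f : α → ℕ) :
    ∀ {l : List α}, ∀ a ∈ l, ∀ b ∈ l, a ≠ b → f a + f b ≤ (l.map f).sum := by
  intro l
  induction l with
  | nil => simp
  | cons x xs ih =>
    intro a ha b hb hne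
    simp only [List.map_cons, List.sum_cons]
    rcases List.mem_cons.mp ha with rfl | ha2
    · rcases List.mem_cons.mp hb with rfl | hb2
      · exact absurd rfl hne
      · have := elem_le_sum f b hb2; omega
    · rcases List.mem_cons.mp hb with rfl | hb2
      · have := elem_le_sum f a ha2; omega
      · have := ih a ha2 b hb2 hne; omega

theorem zsum {α β : Type _} (Ff : α → ℕ) (G : β → ℕ) :
    ∀ (l₁ : List α) (l₂ : List β),
      ((l₁.zip l₂).map fun p => Ff p.1 + G p.2).sum ≤ (l₁.map Ff).sum + (l₂.map G).sum := by
  intro l₁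
  induction l₁ with
  | nil => simp
  | cons x xs ih =>
    intro l₂
    cases l₂ with
    | nil => simp
    | cons y ys =>
      simp only [List.zip_cons_cons, List.map_cons, List.sum_cons]
      have := ih ys
      omega

theorem sum_map_flatMap {α β : Type _} (g : β → ℕ) (f : α → List β) :
    ∀ l : List α, ((l.flatMap f).map g).sum = (l.map fun a => ((f a).map g).sum).sum := by
  intro l
  induction l with
  | nil => simp
  | cons x xs ih => simp [ih]

theorem flatMap_eq_map_of {α β : Type _} {f : α → List β} {g : α → β} :
    ∀ {l : List α}, (∀ a ∈ l, f a = [g a]) → l.flatMap f = l.map g := by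
  intro l
  induction l with
  | nil => simp
  | cons x xs ih =>
    intro h
    simp only [List.flatMap_cons, List.map_cons, h x (by simp)]
    rw [ih fun a ha => h a (by simp [ha])]
    rfl

/-! ### Basic term lemmas -/

theorem subst_var (τ : Subst F V) (v : V) : (Term.var v).subst τ = τ v := by
  simp [Term.subst]

theorem subst_app (τ : Subst F V) (f : F) (ts : List (Term F V)) :
    (Term.app f ts).subst τ = Term.app f (ts.map (Term.subst τ)) := by
  rw [Term.subst]
  congr 1
  exact List.attach_map_val (l := ts) (f := Term.subst τ)

theorem count_app (w : V) (f : F) (ts : List (Term F V)) :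
    Term.count w (Term.app f ts) = (ts.map (Term.count w)).sum := by
  rw [Term.count]
  congr 1
  exact List.attach_map_val (l := ts) (f := Term.count w)

/-- List of variable occurrences of a term, with multiplicity. -/
def varList : Term F V → List V
  | Term.var v => [v]
  | Term.app _ ts => ts.attach.flatMap fun ⟨t, _⟩ => varList t
termination_by t => sizeOf t
decreasing_by
  rename_i ht
  have := List.sizeOf_lt_of_mem ht
  simp only [Term.app.sizeOf_spec]
  omega

theorem varList_app (f : F) (ts : List (Term F V)) :
    varList (Term.app f ts) = ts.flatMap varList := by
  rw [varList]; exact attach_flatMap ts varList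

theorem count_eq (w : V) : ∀ t : Term F V, Term.count w t = (varList t).count w := by
  refine term_ind (fun v => ?_) (fun f ts ih => ?_)
  · by_cases h : v = w
    · simp [Term.count, varList, List.count_singleton', h]
    · simp [Term.count, varList, List.count_singleton', h]
  · rw [count_app, varList_app, List.count_flatMap]
    congr 1
    exact List.map_congr_left fun t ht => by rw [ih t ht]; rfl

theorem varList_subst (τ : Subst F V) :
    ∀ t : Term F V, varList (t.subst τ) = (varList t).flatMap fun w => varList (τ w) := by
  refine term_ind (fun v => ?_) (fun f ts ih => ?_)
  · simp [Term.subst, varList]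
  · rw [subst_app, varList_app, varList_app, List.flatMap_assoc,
      List.flatMap_map]
    exact List.flatMap_congr fun t ht => ih t ht

theorem subst_subst (σ τ : Subst F V) :
    ∀ t : Term F V, (t.subst σ).subst τ = t.subst (fun v => (σ v).subst τ) := by
  refine term_ind (fun v => ?_) (fun f ts ih => ?_)
  · simp [Term.subst]
  · rw [subst_app, subst_app, subst_app, List.map_map]
    congr 1
    exact List.map_congr_left fun t ht => ih t ht

theorem subst_id_of (τ : Subst F V) :
    ∀ t : Term F V, (∀ w ∈ varList t, τ w = Term.var w) → t.subst τ = t := by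
  refine term_ind (fun v => ?_) (fun f ts ih => ?_)
  · intro h
    simp only [Term.subst]
    exact h v (by simp [varList])
  · intro h
    rw [subst_app]
    congr 1
    rw [show ts.map (Term.subst τ) = ts.map id from ?_, List.map_id]
    refine List.map_congr_left fun t ht => ih t ht fun w hw => ?_
    exact h w (by rw [varList_app]; exact List.mem_flatMap.mpr ⟨t, ht, hw⟩)

theorem id_of_subst (τ : Subst F V) :
    ∀ t : Term F V, t.subst τ = t → ∀ w ∈ varList t, τ w = Term.var w := by
  refine term_ind (fun v => ?_) (fun f ts ih => ?_)
  · intro h w hw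
    simp only [varList, List.mem_singleton] at hw
    subst hw
    simpa only [Term.subst] using h
  · intro h w hw
    rw [subst_app] at h
    injection h with _ h2
    rw [varList_app] at hw
    obtain ⟨t, ht, hw⟩ := List.mem_flatMap.mp hw
    exact ih t ht (map_eq_self' h2 t ht) w hw

/-! ### The parallel decomposition bindings -/

/-- The bindings obtained by parallel decomposition of two terms. -/
def bindings : Term F V → Term F V → List (V × Term F V)
  | Term.var x, t => [(x, t)]
  | Term.app f ss, Term.var y => [(y, Term.app f ss)]
  | Term.app _ ss, Term.app _ ts =>
      (ss.zip ts).attach.flatMap fun ⟨p, _⟩ => bindings p.1 p.2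
termination_by s _ => sizeOf s
decreasing_by
  rename_i hmem
  obtain ⟨h1, _⟩ := List.of_mem_zip hmem
  have := List.sizeOf_lt_of_mem h1
  simp only [Term.app.sizeOf_spec]
  omega

theorem bindings_app (f g : F) (ss ts : List (Term F V)) :
    bindings (Term.app f ss) (Term.app g ts)
      = (ss.zip ts).flatMap fun p => bindings p.1 p.2 := by
  rw [bindings]
  exact attach_flatMap (ss.zip ts) (fun p => bindings p.1 p.2)

/-- Any unifier satisfies all bindings. -/
theorem b_sound (τ : Subst F V) :
    ∀ s t : Term F V, s.subst τ = t.subst τ →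
      ∀ e ∈ bindings s t, τ e.1 = e.2.subst τ
  | Term.var x, t => by
    intro h e he
    simp only [bindings, List.mem_singleton] at he
    subst he
    rw [subst_var] at h
    exact h
  | Term.app f ss, Term.var y => by
    intro h e he
    simp only [bindings, List.mem_singleton] at he
    subst he
    rw [subst_var] at h
    exact h.symm
  | Term.app f ss, Term.app g ts => by
    intro h e he
    rw [bindings_app] at he
    obtain ⟨p, hp, he⟩ := List.mem_flatMap.mp he
    rw [subst_app, subst_app] at h
    injection h with _ h2
    have hpt : p.1.subst τ = p.2.subst τ := zip_map_eq h2 p hp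
    have hs1 : p.1 ∈ ss := (List.of_mem_zip (show (p.1, p.2) ∈ ss.zip ts from hp)).1
    have := List.sizeOf_lt_of_mem hs1
    exact b_sound τ p.1 p.2 hpt e he
termination_by s _ => sizeOf s
decreasing_by
  simp only [Term.app.sizeOf_spec]
  omega

/-- Weight of a binding at a variable `w`: occurrences of `w` in the right-hand
side, plus one if `w` is the key. -/
def wt (w : V) (e : V × Term F V) : ℕ :=
  Term.count w e.2 + (if e.1 = w then 1 else 0)

theorem b_weight (w : V) :
    ∀ s t : Term F V,
      ((bindings s t).map (wt w)).sum ≤ Term.count w s + Term.count w t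
  | Term.var x, t => by
    simp only [bindings, List.map_cons, List.map_nil, List.sum_cons, List.sum_nil, wt]
    simp only [Term.count]
    omega
  | Term.app f ss, Term.var y => by
    simp only [bindings, List.map_cons, List.map_nil, List.sum_cons, List.sum_nil, wt]
    simp only [Term.count]
    omega
  | Term.app f ss, Term.app g ts => by
    rw [bindings_app, sum_map_flatMap]
    calc ((ss.zip ts).map fun p => ((bindings p.1 p.2).map (wt w)).sum ).sum
        ≤ ((ss.zip ts).map fun p => Term.count w p.1 + Term.count w p.2).sum := by
          refine List.sum_le_sum fun p hp => ?_
          have hs1 : p.1 ∈ ss := (List.of_mem_zip (show (p.1, p.2) ∈ ss.zip ts from hp)).1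
          have := List.sizeOf_lt_of_mem hs1
          exact b_weight w p.1 p.2
      _ ≤ (ss.map (Term.count w)).sum + (ts.map (Term.count w)).sum := zsum _ _ _ _
      _ = Term.count w (Term.app f ss) + Term.count w (Term.app g ts) := by
          rw [count_app, count_app]
termination_by s _ => sizeOf s
decreasing_by
  simp only [Term.app.sizeOf_spec]
  omega

/-- Each binding has its key on one side and its right-hand-side variables on the
other side. -/
theorem b_sides :
    ∀ s t : Term F V, ∀ e ∈ bindings s t,
      (e.1 ∈ varList s ∧ ∀ u ∈ varList e.2, u ∈ varList t) ∨
      (e.1 ∈ varList t ∧ ∀ u ∈ varList e.2, u ∈ varList s)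
  | Term.var x, t => by
    intro e he
    simp only [bindings, List.mem_singleton] at he
    subst he
    exact Or.inl ⟨by simp [varList], fun u hu => hu⟩
  | Term.app f ss, Term.var y => by
    intro e he
    simp only [bindings, List.mem_singleton] at he
    subst he
    exact Or.inr ⟨by simp [varList], fun u hu => hu⟩
  | Term.app f ss, Term.app g ts => by
    intro e he
    rw [bindings_app] at he
    obtain ⟨p, hp, he⟩ := List.mem_flatMap.mp he
    obtain ⟨hs1, hs2⟩ := List.of_mem_zip (show (p.1, p.2) ∈ ss.zip ts from hp)
    have := List.sizeOf_lt_of_mem hs1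
    have hlift1 : ∀ u ∈ varList p.1, u ∈ varList (Term.app f ss) := fun u hu => by
      rw [varList_app]; exact List.mem_flatMap.mpr ⟨p.1, hs1, hu⟩
    have hlift2 : ∀ u ∈ varList p.2, u ∈ varList (Term.app g ts) := fun u hu => by
      rw [varList_app]; exact List.mem_flatMap.mpr ⟨p.2, hs2, hu⟩
    rcases b_sides p.1 p.2 e he with ⟨h1, h2⟩ | ⟨h1, h2⟩
    · exact Or.inl ⟨hlift1 _ h1, fun u hu => hlift2 u (h2 u hu)⟩
    · exact Or.inr ⟨hlift2 _ h1, fun u hu => hlift1 u (h2 u hu)⟩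
termination_by s _ => sizeOf s
decreasing_by
  simp only [Term.app.sizeOf_spec]
  omega

/-- The substitution associated with a binding list. -/
def assocSubst (L : List (V × Term F V)) : Subst F V := fun v =>
  match L.find? (fun e => e.1 == v) with
  | some e => e.2
  | none => Term.var v

theorem assoc_cases (L : List (V × Term F V)) (v : V) :
    (∃ e ∈ L, e.1 = v ∧ assocSubst L v = e.2) ∨
    ((∀ e ∈ L, e.1 ≠ v) ∧ assocSubst L v = Term.var v) := by
  unfold assocSubst
  rcases hf : L.find? (fun e => e.1 == v) with _ | e
  · right
    refine ⟨fun e he hkey => ?_, by rw [hf]⟩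
    have := List.find?_eq_none.mp hf e he
    simp [hkey] at this
  · left
    exact ⟨e, List.mem_of_find?_eq_some hf,
      by simpa using List.find?_some hf, by rw [hf]⟩

/-- Key property for the unifier construction: the induced substitution unifies
every aligned pair, provided a unifier exists. -/
theorem unif_aux (τ : Subst F V) (L : List (V × Term F V)) (σa : Subst F V)
    (hk1 : ∀ e ∈ L, σa e.1 = e.2)
    (hk2 : ∀ e ∈ L, ∀ w ∈ varList e.2, σa w = Term.var w) :
    ∀ s t : Term F V, (∀ e ∈ bindings s t, e ∈ L) →
      s.subst τ = t.subst τ → s.subst σa = t.subst σa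
  | Term.var x, t => by
    intro hsub _
    have he : (x, t) ∈ L := hsub (x, t) (by simp [bindings])
    rw [subst_var]
    have h1 : σa x = t := hk1 (x, t) he
    rw [h1, subst_id_of σa t (hk2 (x, t) he)]
  | Term.app f ss, Term.var y => by
    intro hsub _
    have he : (y, Term.app f ss) ∈ L := hsub _ (by simp [bindings])
    rw [subst_var]
    have h1 : σa y = Term.app f ss := hk1 (y, Term.app f ss) he
    rw [h1]
    exact subst_id_of σa (Term.app f ss) (hk2 (y, Term.app f ss) he)
  | Term.app f ss, Term.app g ts => by
    intro hsub h
    rw [subst_app, subst_app] at h ⊢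
    injection h with h1 h2
    subst h1
    congr 1
    have hlen : ss.length = ts.length := by
      have := congrArg List.length h2
      simpa using this
    refine map_eq_of_zip hlen fun p hp => ?_
    have hs1 : p.1 ∈ ss := (List.of_mem_zip (show (p.1, p.2) ∈ ss.zip ts from hp)).1
    have := List.sizeOf_lt_of_mem hs1
    refine unif_aux τ L σa hk1 hk2 p.1 p.2 (fun e he => ?_) (zip_map_eq h2 p hp)
    refine hsub e ?_
    rw [bindings_app]
    exact List.mem_flatMap.mpr ⟨p, hp, he⟩
termination_by s _ => sizeOf s
decreasing_by
  simp only [Term.app.sizeOf_spec]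
  omega

end Stmt2Aux

namespace Stmt2Aux

theorem main {F V : Type} [DecidableEq V] (A H B : Term F V) (θ : Subst F V)
    (hlinAH : ∀ v, Term.count v A + Term.count v H ≤ 1)
    (hlinBH : ∀ v, Term.count v B + Term.count v H ≤ 1)
    (hmgu : IsMGUPair θ A H) :
    (B.subst θ).Linear := by
  classical
  obtain ⟨hθ, hmost⟩ := hmgu
  have hθ' : A.subst θ = H.subst θ := hθ
  -- notation
  have hW : ∀ w, (((bindings A H).map (wt w)).sum) ≤ 1 :=
    fun w => (b_weight w A H).trans (hlinAH w)
  have hwt_count : ∀ (w : V) (e : V × Term F V), Term.count w e.2 ≤ wt w e :=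
    fun w e => Nat.le_add_right _ _
  have hwt_key : ∀ (w : V) (e : V × Term F V), e.1 = w → 1 ≤ wt w e := by
    intro w e hkey
    simp [wt, hkey]
  have hmemc : ∀ (w : V) (r : Term F V), w ∈ varList r → 1 ≤ Term.count w r := by
    intro w r hw
    rw [count_eq]
    exact List.count_pos_iff.mpr hw
  -- the canonical substitution
  set σ : Subst F V := assocSubst (bindings A H) with hσdef
  have hcases := assoc_cases (bindings A H)
  -- key facts
  have k1 : ∀ e ∈ bindings A H, σ e.1 = e.2 := by
    intro e he
    rcases hcases e.1 with ⟨e', he', hkey, hval⟩ | ⟨hnone, hval⟩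
    · rw [hσdef, hval]
      by_cases heq : e' = e
      · rw [heq]
      · exfalso
        have h1 : 1 ≤ wt e.1 e := hwt_key e.1 e rfl
        have h2 : 1 ≤ wt e.1 e' := hwt_key e.1 e' hkey
        have h3 := pair_le_sum (wt e.1) e' he' e he heq
        have h4 := hW e.1
        omega
    · exact absurd rfl (hnone e he)
  have k2 : ∀ e ∈ bindings A H, ∀ w ∈ varList e.2, σ w = Term.var w := by
    intro e he w hw
    rcases hcases w with ⟨e', he', hkey, hval⟩ | ⟨_, hval⟩
    · exfalso
      have hcnt : 1 ≤ Term.count w e.2 := hmemc w e.2 hw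
      have h4 := hW w
      by_cases heq : e' = e
      · subst heq
        have h1 : 2 ≤ wt w e' := by
          have : wt w e' = Term.count w e'.2 + (if e'.1 = w then 1 else 0) := rfl
          simp only [hkey, if_pos] at this
          omega
        have h2 := elem_le_sum (wt w) e' he'
        omega
      · have h1 : 1 ≤ wt w e' := hwt_key w e' hkey
        have h2 : 1 ≤ wt w e := le_trans hcnt (hwt_count w e)
        have h3 := pair_le_sum (wt w) e' he' e he heq
        omega
    · rw [hσdef]; exact hval
  -- σ is a unifier
  have hσunif : A.subst σ = H.subst σ :=
    unif_aux θ (bindings A H) σ k1 k2 A H (fun _ he => he) hθ'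
  -- θ = σ ∘ θ
  have hcomp : ∀ v, θ v = (σ v).subst θ := by
    intro v
    rcases hcases v with ⟨e, he, hkey, hval⟩ | ⟨_, hval⟩
    · rw [hσdef, hval, ← hkey]
      exact b_sound θ A H hθ' e he
    · rw [hσdef, hval, subst_var]
  -- σ = θ ∘ η
  obtain ⟨η, hη⟩ := hmost σ hσunif
  -- each variable of range of σ is fixed by θ ∘ η
  have hfix : ∀ v, (σ v).subst (fun w => (θ w).subst η) = σ v := by
    intro v
    have h1 : σ v = (θ v).subst η := congrFun hη v
    calc (σ v).subst (fun w => (θ w).subst η)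
        = ((σ v).subst θ).subst η := (subst_subst θ η (σ v)).symm
      _ = (θ v).subst η := by rw [← hcomp v]
      _ = σ v := h1.symm
  have hvarfix : ∀ v w, w ∈ varList (σ v) → (θ w).subst η = Term.var w :=
    fun v w hw => id_of_subst _ (σ v) (hfix v) w hw
  -- variables of Bσ
  have hdom : ∀ w ∈ varList (B.subst σ), ∃ v ∈ varList B, w ∈ varList (σ v) := by
    intro w hw
    rw [varList_subst] at hw
    exact List.mem_flatMap.mp hw
  have hg0 : ∀ w ∈ varList (B.subst σ), ∃ u, θ w = Term.var u ∧ η u = Term.var w := by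
    intro w hw
    obtain ⟨v, _, hv⟩ := hdom w hw
    have hρ := hvarfix v w hv
    cases hθw : θ w with
    | var u =>
      rw [hθw, subst_var] at hρ
      exact ⟨u, rfl, hρ⟩
    | app f2 ts2 =>
      rw [hθw, subst_app] at hρ
      cases hρ
  -- the renaming function
  set g : V → V := fun w => if h : ∃ u, θ w = Term.var u then h.choose else w with hgdef
  have hgspec : ∀ w ∈ varList (B.subst σ),
      θ w = Term.var (g w) ∧ η (g w) = Term.var w := by
    intro w hw
    obtain ⟨u, hu1, hu2⟩ := hg0 w hw
    have hex : ∃ u, θ w = Term.var u := ⟨u, hu1⟩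
    have hgw : g w = hex.choose := by rw [hgdef]; exact dif_pos hex
    have hch : θ w = Term.var hex.choose := hex.choose_spec
    have huu : hex.choose = u := by
      have := hch.symm.trans hu1
      injection this
    rw [hgw, huu]
    exact ⟨hu1, hu2⟩
  -- Bθ = (Bσ)θ
  have hBθ : B.subst θ = (B.subst σ).subst θ := by
    have h1 : B.subst θ = B.subst (fun v => (σ v).subst θ) := by
      congr 1
      funext v
      exact hcomp v
    rw [h1]
    exact (subst_subst σ θ B).symm
  have hvl : varList (B.subst θ) = (varList (B.subst σ)).map g := by
    rw [hBθ, varList_subst]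
    refine flatMap_eq_map_of fun w hw => ?_
    rw [(hgspec w hw).1]
    simp [varList]
  -- nodup of varList Bσ
  have hBnodup : (varList B).Nodup := by
    refine List.nodup_iff_count_le_one.mpr fun v => ?_
    rw [← count_eq]
    have := hlinBH v
    omega
  have hBH : ∀ v ∈ varList B, v ∉ varList H := by
    intro v hv hvH
    have h1 := hmemc v B hv
    have h2 := hmemc v H hvH
    have := hlinBH v
    omega
  have hblock : ∀ v, (varList (σ v)).Nodup := by
    intro v
    rcases hcases v with ⟨e, he, hkey, hval⟩ | ⟨_, hval⟩
    · rw [hσdef, hval]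
      refine List.nodup_iff_count_le_one.mpr fun w => ?_
      rw [← count_eq]
      have h1 := elem_le_sum (wt w) e he
      have h2 := hW w
      have h3 := hwt_count w e
      omega
    · rw [hσdef, hval]
      simp [varList]
  have hsideB : ∀ e ∈ bindings A H, e.1 ∈ varList B →
      ∀ u ∈ varList e.2, u ∈ varList H := by
    intro e he hkeyB u hu
    rcases b_sides A H e he with ⟨_, h2⟩ | ⟨h1, _⟩
    · exact h2 u hu
    · exact absurd h1 (hBH _ hkeyB)
  have hdisj : ∀ v₁ ∈ varList B, ∀ v₂ ∈ varList B, v₁ ≠ v₂ →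
      ∀ w, w ∈ varList (σ v₁) → w ∈ varList (σ v₂) → False := by
    intro v₁ hv₁ v₂ hv₂ hne w hw1 hw2
    rcases hcases v₁ with ⟨e₁, he₁, hkey₁, hval₁⟩ | ⟨_, hval₁⟩ <;>
      rcases hcases v₂ with ⟨e₂, he₂, hkey₂, hval₂⟩ | ⟨_, hval₂⟩
    · -- both bound
      rw [hσdef, hval₁] at hw1
      rw [hσdef, hval₂] at hw2
      have hne' : e₁ ≠ e₂ := by
        intro h
        exact hne (hkey₁ ▸ hkey₂ ▸ congrArg Prod.fst h)
      have hc1 : 1 ≤ wt w e₁ := le_trans (hmemc w e₁.2 hw1) (hwt_count w e₁)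
      have hc2 : 1 ≤ wt w e₂ := le_trans (hmemc w e₂.2 hw2) (hwt_count w e₂)
      have h3 := pair_le_sum (wt w) e₁ he₁ e₂ he₂ hne'
      have h4 := hW w
      omega
    · -- v₁ bound, v₂ unbound
      rw [hσdef, hval₁] at hw1
      rw [hσdef, hval₂] at hw2
      simp only [varList, List.mem_singleton] at hw2
      subst hw2
      have : w ∈ varList H := hsideB e₁ he₁ (hkey₁ ▸ hv₁) w hw1
      exact hBH w hv₂ this
    · -- v₁ unbound, v₂ bound
      rw [hσdef, hval₁] at hw1
      rw [hσdef, hval₂] at hw2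
      simp only [varList, List.mem_singleton] at hw1
      subst hw1
      have : w ∈ varList H := hsideB e₂ he₂ (hkey₂ ▸ hv₂) w hw2
      exact hBH w hv₁ this
    · -- both unbound
      rw [hσdef, hval₁] at hw1
      rw [hσdef, hval₂] at hw2
      simp only [varList, List.mem_singleton] at hw1 hw2
      exact hne (hw1.symm.trans hw2 ▸ rfl)
  have hnodupBσ : (varList (B.subst σ)).Nodup := by
    rw [varList_subst]
    refine List.nodup_flatMap.mpr ⟨fun v _ => hblock v, ?_⟩
    exact List.Pairwise.imp_of_mem
      (fun {a b} ha hb hab => fun w hw1 hw2 => hdisj a ha b hb hab w hw1 hw2)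
      hBnodup
  -- injectivity of g on varList Bσ
  have hinj : ∀ x ∈ varList (B.subst σ), ∀ y ∈ varList (B.subst σ),
      g x = g y → x = y := by
    intro x hx y hy hxy
    have h1 := (hgspec x hx).2
    have h2 := (hgspec y hy).2
    rw [hxy] at h1
    have := h1.symm.trans h2
    injection this
  -- conclusion
  have hfin : (varList (B.subst θ)).Nodup := by
    rw [hvl]
    exact hnodupBσ.map_on hinj
  intro w
  rw [count_eq]
  exact List.nodup_iff_count_le_one.mp hfin w

end Stmt2Aux

/-- If each of the pairs of atoms `A`, `H` and `B`, `H` is linear and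
`θ` is an mgu of `A` and `H`, then `Bθ` is linear. -/
theorem stmt2 {F V : Type} [DecidableEq V] (A H B : Term F V) (θ : Subst F V)
    (hlinAH : ∀ v, Term.count v A + Term.count v H ≤ 1)
    (hlinBH : ∀ v, Term.count v B + Term.count v H ≤ 1)
    (hmgu : IsMGUPair θ A H) :
    (B.subst θ).Linear :=
  Stmt2Aux.main A H B θ hlinAH hlinBH hmgu
end

section
/- Let Q0 = pqs(n,t1,t2,t3) be a linear query (no variable occurs in it more than once) in which n is ground. Then in any SLD-derivation for the program NQUEENS with initial query Q0 (under an arbitrary selection rule), each atom in each query is linear. -/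
variable {F V : Type}

/-! # Definite clause programs, SLD-resolution, and the program NQUEENS -/

/-- A definite clause `head :- body` (atoms are represented as terms whose top
symbol is a predicate symbol). -/
structure Clause (F V : Type) where
  head : Term F V
  body : List (Term F V)

/-- A renaming: a substitution given by a permutation of the variables. -/
def IsRenaming (σ : Subst F V) : Prop := ∃ ρ : V ≃ V, ∀ v, σ v = Term.var (ρ v)

/-- The variant of a clause obtained by applying a (renaming) substitution. -/
def Clause.rename (c : Clause F V) (σ : Subst F V) : Clause F V :=
  ⟨c.head.subst σ, c.body.map (Term.subst σ)⟩

/-- The variable `v` occurs in the clause `c`. -/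
def Clause.varIn (c : Clause F V) (v : V) : Prop :=
  Term.VarIn v c.head ∨ ∃ b ∈ c.body, Term.VarIn v b

/-- The variable `v` occurs in the query `Q` (a query is a finite list of atoms). -/
def queryVars (Q : List (Term F V)) (v : V) : Prop := ∃ A ∈ Q, Term.VarIn v A

/-- One SLD-resolution step: some atom `A` of the query is selected (the selection
rule being arbitrary), a standardized-apart variant of a clause of `P` is taken
(its variables disjoint from those of the query) whose head unifies with `A` with
mgu `θ`; `A` is replaced by the body of the variant and `θ` is applied. -/
inductive SLDStep (P : List (Clause F V)) : List (Term F V) → List (Term F V) → Prop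
  | step {Q1 Q2 : List (Term F V)} {A : Term F V} {c : Clause F V} {σ θ : Subst F V} :
      c ∈ P → IsRenaming σ →
      (∀ v, (c.rename σ).varIn v → ¬ queryVars (Q1 ++ A :: Q2) v) →
      IsMGUPair θ A (c.rename σ).head →
      SLDStep P (Q1 ++ A :: Q2) ((Q1 ++ (c.rename σ).body ++ Q2).map (Term.subst θ))

/-- `Q` is a query of some SLD-derivation for `P` starting with `Q0`
(under an arbitrary selection rule). -/
def SLDReach (P : List (Clause F V)) (Q0 Q : List (Term F V)) : Prop :=
  Relation.ReflTransGen (SLDStep P) Q0 Q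

/-- Unification of `A` and `H` is available in an SLD-derivation for `P` with `Q0`:
`A` is a (possibly selected) atom of a query of the derivation and `H` is a
standardized-apart head of a clause of `P` with the same predicate symbol as `A`. -/
def AvailableUnif (P : List (Clause F V)) (Q0 : List (Term F V)) (A Hd : Term F V) : Prop :=
  ∃ Q, SLDReach P Q0 Q ∧ A ∈ Q ∧
    ∃ c ∈ P, ∃ σ, IsRenaming σ ∧ Hd = (c.rename σ).head ∧
      (∀ v, (c.rename σ).varIn v → ¬ queryVars Q v) ∧
      (∃ f as hs, A = Term.app f as ∧ Hd = Term.app f hs)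

/-- The first argument of every atom of the query is ground. -/
def FirstArgGround (Q : List (Term F V)) : Prop :=
  ∀ A ∈ Q, ∀ f ts, A = Term.app f ts → ∀ t, ts.head? = some t → Term.Ground t

/-- The signature of the program NQUEENS: the constant `0`, the unary `s`,
the list constructor `[·|·]`, and the predicate symbols `pqs` and `pq`. -/
inductive NQF : Type
  | zero | succ | cons | pqs | pq
  deriving DecidableEq

def nqZero : Term NQF ℕ := Term.app NQF.zero []
def nqS (t : Term NQF ℕ) : Term NQF ℕ := Term.app NQF.succ [t]
def nqCons (h t : Term NQF ℕ) : Term NQF ℕ := Term.app NQF.cons [h, t]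
def nqPqs (a b c d : Term NQF ℕ) : Term NQF ℕ := Term.app NQF.pqs [a, b, c, d]
def nqPq (a b c d : Term NQF ℕ) : Term NQF ℕ := Term.app NQF.pq [a, b, c, d]

open Term in
/-- `pqs(0,_,_,_).` -/
def clause1 : Clause NQF ℕ := ⟨nqPqs nqZero (var 0) (var 1) (var 2), []⟩

open Term in
/-- `pqs(s(I),Cs,Us,[_|Ds]) :- pqs(I,Cs,[_|Us],Ds), pq(s(I),Cs,Us,Ds).`
with `I,Cs,Us,Ds` = `0,1,2,3` and the underscores `4,5`. -/
def clause2 : Clause NQF ℕ :=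
  ⟨nqPqs (nqS (var 0)) (var 1) (var 2) (nqCons (var 4) (var 3)),
   [nqPqs (var 0) (var 1) (nqCons (var 5) (var 2)) (var 3),
    nqPq (nqS (var 0)) (var 1) (var 2) (var 3)]⟩

open Term in
/-- `pq(I,[I|_],[I|_],[I|_]).` -/
def clause3 : Clause NQF ℕ :=
  ⟨nqPq (var 0) (nqCons (var 0) (var 1)) (nqCons (var 0) (var 2)) (nqCons (var 0) (var 3)),
   []⟩

open Term in
/-- `pq(I,[_|Cs],[_|Us],[_|Ds]) :- pq(I,Cs,Us,Ds).` -/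
def clause4 : Clause NQF ℕ :=
  ⟨nqPq (var 0) (nqCons (var 4) (var 1)) (nqCons (var 5) (var 2)) (nqCons (var 6) (var 3)),
   [nqPq (var 0) (var 1) (var 2) (var 3)]⟩

/-- The program NQUEENS. -/
def NQUEENS : List (Clause NQF ℕ) := [clause1, clause2, clause3, clause4]

namespace Term
variable {F V : Type}

@[elab_as_elim] theorem ind' {motive : Term F V → Prop}
    (hv : ∀ v, motive (var v))
    (ha : ∀ f ts, (∀ t ∈ ts, motive t) → motive (app f ts)) : ∀ t, motive t
  | var v => hv v
  | app f ts => ha f ts (fun t ht =>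
      have : sizeOf t < sizeOf (app f ts) := by
        have := List.sizeOf_lt_of_mem ht; simp; omega
      ind' hv ha t)
termination_by t => sizeOf t

@[simp] theorem subst_var (σ : Subst F V) (v : V) : (var v).subst σ = σ v := by rw [subst]

@[simp] theorem subst_app (σ : Subst F V) (f : F) (ts : List (Term F V)) :
    (app f ts).subst σ = app f (ts.map (fun t => t.subst σ)) := by
  rw [subst, List.attach_map_val]

/-- list of variable occurrences -/
def vl : Term F V → List V
  | var v => [v]
  | app _ ts => ts.attach.flatMap fun ⟨t, _⟩ => t.vl

@[simp] theorem vl_var (v : V) : (var v : Term F V).vl = [v] := by rw [vl]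

@[simp] theorem vl_app (f : F) (ts : List (Term F V)) :
    (app f ts).vl = ts.flatMap vl := by
  rw [vl, List.flatMap_def, List.flatMap_def, List.attach_map_val]

theorem mem_vl {v : V} {t : Term F V} : v ∈ t.vl ↔ VarIn v t := by
  induction t using ind' with
  | hv w =>
      simp only [vl_var, List.mem_singleton]
      constructor
      · intro h; subst h; exact VarIn.var
      · intro h; cases h; rfl
  | ha f ts ih =>
      simp only [vl_app, List.mem_flatMap]
      constructor
      · rintro ⟨t, ht, hv⟩; exact VarIn.app ht ((ih t ht).1 hv)
      · intro h
        cases h with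
        | app ht hv => exact ⟨_, ht, (ih _ ht).2 hv⟩

theorem ground_iff_vl_nil {t : Term F V} : t.Ground ↔ t.vl = [] := by
  rw [List.eq_nil_iff_forall_not_mem]
  constructor
  · intro h v hv; exact h v (mem_vl.1 hv)
  · intro h v hv; exact h v (mem_vl.2 hv)

theorem count_eq_count_vl [DecidableEq V] (v : V) (t : Term F V) :
    t.count v = t.vl.count v := by
  induction t using ind' with
  | hv w =>
      rw [count, vl_var, List.count_singleton]
      by_cases h : w = v <;> simp [h]
  | ha f ts ih =>
      rw [count, vl_app, List.count_flatMap, List.attach_map_val (l := ts) (f := fun t => t.count v)]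
      congr 1
      apply List.map_congr_left
      intro t ht; simpa using ih t ht

theorem linear_iff_nodup [DecidableEq V] {t : Term F V} : t.Linear ↔ t.vl.Nodup := by
  rw [List.nodup_iff_count_le_one]
  constructor
  · intro h v; rw [← count_eq_count_vl]; exact h v
  · intro h v; rw [count_eq_count_vl]; exact h v

theorem subst_comp_eq (σ η : Subst F V) (t : Term F V) :
    (t.subst σ).subst η = t.subst (σ.comp η) := by
  induction t using ind' with
  | hv v => simp [Subst.comp]
  | ha f ts ih =>
      simp only [subst_app, List.map_map]
      congr 1
      apply List.map_congr_left
      intro t ht; exact ih t ht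

theorem subst_congr {σ σ' : Subst F V} {t : Term F V}
    (h : ∀ v, VarIn v t → σ v = σ' v) : t.subst σ = t.subst σ' := by
  induction t using ind' with
  | hv v => simpa using h v VarIn.var
  | ha f ts ih =>
      simp only [subst_app]
      congr 1
      apply List.map_congr_left
      intro t ht
      exact ih t ht (fun v hv => h v (VarIn.app ht hv))

@[simp] theorem subst_id (t : Term F V) : t.subst Term.var = t := by
  induction t using ind' with
  | hv v => simp
  | ha f ts ih =>
      simp only [subst_app]
      congr 1
      conv_rhs => rw [← List.map_id ts]
      apply List.map_congr_left
      intro t ht; simpa using ih t ht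

theorem match_unique {σ σ' : Subst F V} : ∀ {t : Term F V}, t.subst σ = t.subst σ' →
    ∀ v, VarIn v t → σ v = σ' v := by
  intro t
  induction t using ind' with
  | hv v => intro h w hw; cases hw; simpa using h
  | ha f ts ih =>
      intro h v hv
      cases hv with
      | app ht hv =>
        simp only [subst_app, app.injEq, true_and] at h
        exact ih _ ht (List.map_inj_left.mp h _ ht) v hv

theorem ground_subst {t : Term F V} (h : t.Ground) (σ : Subst F V) : t.subst σ = t := by
  rw [show t.subst σ = t.subst Term.var from subst_congr (fun v hv => absurd hv (h v))]
  exact subst_id t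

theorem vl_subst (σ : Subst F V) (t : Term F V) :
    (t.subst σ).vl = t.vl.flatMap (fun v => (σ v).vl) := by
  induction t using ind' with
  | hv v => simp
  | ha f ts ih =>
      simp only [subst_app, vl_app, List.flatMap_assoc, List.flatMap_map]
      exact List.flatMap_congr ih

end Term

namespace Term
variable {F V : Type}

def tsize : Term F V → ℕ
  | var _ => 1
  | app _ ts => 1 + (ts.attach.map fun ⟨t, _⟩ => t.tsize).sum

@[simp] theorem tsize_var (v : V) : (var v : Term F V).tsize = 1 := by rw [tsize]

@[simp] theorem tsize_app (f : F) (ts : List (Term F V)) :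
    (app f ts).tsize = 1 + (ts.map tsize).sum := by
  rw [tsize, List.attach_map_val]

theorem tsize_pos (t : Term F V) : 1 ≤ t.tsize := by
  cases t <;> simp

end Term

namespace LinU
open Term

variable {F V : Type}

theorem zip_rel {α β γ : Type} {f : α → γ} {g : β → γ} :
    ∀ {l : List α} {l' : List β}, l.map f = l'.map g → ∀ p ∈ l.zip l', f p.1 = g p.2 := by
  intro l
  induction l with
  | nil => intro l' h p hp; simp at hp
  | cons a l ih =>
      intro l' h p hp
      cases l' with
      | nil => simp at hp
      | cons b l' =>
          simp only [List.map_cons, List.cons.injEq] at h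
          simp only [List.zip_cons_cons, List.mem_cons] at hp
          rcases hp with rfl | hp
          · exact h.1
          · exact ih h.2 p hp

theorem map_eq_of_zip {α β γ : Type} {f : α → γ} {g : β → γ} :
    ∀ {l : List α} {l' : List β}, l.length = l'.length →
      (∀ p ∈ l.zip l', f p.1 = g p.2) → l.map f = l'.map g := by
  intro l
  induction l with
  | nil => intro l' h _; cases l' with
           | nil => rfl
           | cons b l' => simp at h
  | cons a l ih =>
      intro l' hlen hp
      cases l' with
      | nil => simp at hlen
      | cons b l' =>
          simp only [List.map_cons]
          refine congrArg₂ _ (hp (a, b) (by simp)) (ih (by simpa using hlen) ?_)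
          intro p hppp; exact hp p (by simp [hppp])

theorem zip_sum {α β : Type} {s : α → ℕ} {s' : β → ℕ} :
    ∀ {l : List α} {l' : List β}, l.length = l'.length →
      ((l.zip l').map (fun e => s e.1 + s' e.2)).sum = (l.map s).sum + (l'.map s').sum := by
  intro l
  induction l with
  | nil => intro l' h; cases l' with
           | nil => rfl
           | cons b l' => simp at h
  | cons a l ih =>
      intro l' hlen
      cases l' with
      | nil => simp at hlen
      | cons b l' => simp [ih (by simpa using hlen)]; omega

theorem zip_flat_perm {α β γ : Type} {f : α → List γ} {g : β → List γ} :
    ∀ {l : List α} {l' : List β}, l.length = l'.length →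
      ((l.zip l').flatMap (fun e => f e.1 ++ g e.2)).Perm (l.flatMap f ++ l'.flatMap g) := by
  intro l
  induction l with
  | nil => intro l' h; cases l' with
           | nil => simp
           | cons b l' => simp at h
  | cons a l ih =>
      intro l' hlen
      cases l' with
      | nil => simp at hlen
      | cons b l' =>
          simp only [List.zip_cons_cons, List.flatMap_cons, List.append_assoc]
          refine List.Perm.append_left (f a) ?_
          have h1 := ih (l' := l') (by simpa using hlen)
          exact (List.Perm.append_left (g b) h1).trans (List.perm_append_comm_assoc _ _ _)

theorem zip_fst_flatMap {α β γ : Type} {f : α → List γ} :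
    ∀ {l : List α} {l' : List β}, l.length = l'.length →
      (l.zip l').flatMap (fun e => f e.1) = l.flatMap f := by
  intro l
  induction l with
  | nil => intro l' h; simp
  | cons a l ih =>
      intro l' hlen
      cases l' with
      | nil => simp at hlen
      | cons b l' => simp [ih (by simpa using hlen)]

theorem zip_snd_flatMap {α β γ : Type} {g : β → List γ} :
    ∀ {l : List α} {l' : List β}, l.length = l'.length →
      (l.zip l').flatMap (fun e => g e.2) = l'.flatMap g := by
  intro l
  induction l with
  | nil => intro l' h; cases l' with
           | nil => simp
           | cons b l' => simp at h
  | cons a l ih =>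
      intro l' hlen
      cases l' with
      | nil => simp at hlen
      | cons b l' => simp [ih (by simpa using hlen)]

/-- The "U-side" variables of a list of equations. -/
def sideU (pairs : List (Eqn F V)) : List V := pairs.flatMap (fun e => (vl e.1))
/-- The "H-side" variables of a list of equations. -/
def sideW (pairs : List (Eqn F V)) : List V := pairs.flatMap (fun e => (vl e.2))
/-- All variables of a list of equations. -/
def allV (pairs : List (Eqn F V)) : List V := pairs.flatMap (fun e => vl e.1 ++ vl e.2)

theorem mem_allV_of_U {pairs : List (Eqn F V)} {v : V} (h : v ∈ sideU pairs) :
    v ∈ allV pairs := by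
  simp only [sideU, allV, List.mem_flatMap, List.mem_append] at *
  obtain ⟨e, he, hv⟩ := h; exact ⟨e, he, Or.inl hv⟩

theorem mem_allV_of_W {pairs : List (Eqn F V)} {v : V} (h : v ∈ sideW pairs) :
    v ∈ allV pairs := by
  simp only [sideW, allV, List.mem_flatMap, List.mem_append] at *
  obtain ⟨e, he, hv⟩ := h; exact ⟨e, he, Or.inr hv⟩

/-- Properties of the nice mgu of a family of linear, pairwise variable-disjoint
equations. -/
structure CProps [DecidableEq V] (μ : Subst F V) (pairs : List (Eqn F V)) : Prop where
  unif : ∀ e ∈ pairs, e.1.subst μ = e.2.subst μ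
  mgu : ∀ τ' : Subst F V, (∀ e ∈ pairs, e.1.subst τ' = e.2.subst τ') →
      ∀ v, τ' v = (μ v).subst τ'
  side : ∀ v, μ v ≠ Term.var v →
      (v ∈ sideU pairs ∧ ∀ w, w ∈ (μ v).vl → w ∈ sideW pairs) ∨
      (v ∈ sideW pairs ∧ ∀ w, w ∈ (μ v).vl → w ∈ sideU pairs)
  nd : ∀ v, (μ v).vl.Nodup
  disj : ∀ v v', v ≠ v' → μ v ≠ Term.var v → μ v' ≠ Term.var v' →
      ∀ w, w ∈ (μ v).vl → w ∉ (μ v').vl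

theorem cprops_nil [DecidableEq V] : CProps (Term.var : Subst F V) [] := by
  refine ⟨by simp, ?_, ?_, ?_, ?_⟩
  · intro τ' _ v; simp
  · intro v hv; exact absurd rfl hv
  · intro v; simp
  · intro v v' _ hv; exact absurd rfl hv

theorem cprops_support [DecidableEq V] {μ : Subst F V} {pairs : List (Eqn F V)}
    (hp : CProps μ pairs) {v : V} (hv : v ∉ allV pairs) : μ v = Term.var v := by
  by_contra h
  rcases hp.side v h with ⟨h1, _⟩ | ⟨h1, _⟩
  · exact hv (mem_allV_of_U h1)
  · exact hv (mem_allV_of_W h1)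

theorem cprops_range [DecidableEq V] {μ : Subst F V} {pairs : List (Eqn F V)}
    (hp : CProps μ pairs) {v w : V} (hb : μ v ≠ Term.var v) (hw : w ∈ (μ v).vl) :
    w ∈ allV pairs := by
  rcases hp.side v hb with ⟨_, h2⟩ | ⟨_, h2⟩
  · exact mem_allV_of_W (h2 w hw)
  · exact mem_allV_of_U (h2 w hw)


@[simp] theorem allV_cons (e : Eqn F V) (rest : List (Eqn F V)) :
    allV (e :: rest) = vl e.1 ++ (vl e.2 ++ allV rest) := by simp [allV]

@[simp] theorem sideU_cons (e : Eqn F V) (rest : List (Eqn F V)) :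
    sideU (e :: rest) = vl e.1 ++ sideU rest := by simp [sideU]

@[simp] theorem sideW_cons (e : Eqn F V) (rest : List (Eqn F V)) :
    sideW (e :: rest) = vl e.2 ++ sideW rest := by simp [sideW]


@[simp] theorem allV_append (p q : List (Eqn F V)) : allV (p ++ q) = allV p ++ allV q := by
  simp [allV]

@[simp] theorem sideU_append (p q : List (Eqn F V)) : sideU (p ++ q) = sideU p ++ sideU q := by
  simp [sideU]

@[simp] theorem sideW_append (p q : List (Eqn F V)) : sideW (p ++ q) = sideW p ++ sideW q := by
  simp [sideW]

theorem cprops_extend [DecidableEq V] {rest : List (Eqn F V)} {μ' : Subst F V}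
    (hp : CProps μ' rest) (x : V) (t : Term F V)
    (hxt : x ∉ vl t) (hxr : x ∉ allV rest)
    (htr : ∀ w, w ∈ vl t → w ∉ allV rest) (hndt : (vl t).Nodup) :
    ∃ μ : Subst F V,
      μ x = t ∧
      (∀ e ∈ rest, e.1.subst μ = e.2.subst μ) ∧
      (∀ τ' : Subst F V, τ' x = t.subst τ' →
        (∀ e ∈ rest, e.1.subst τ' = e.2.subst τ') → ∀ v, τ' v = (μ v).subst τ') ∧
      (∀ v, μ v ≠ Term.var v → v = x ∨ (μ v = μ' v ∧ μ' v ≠ Term.var v)) ∧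
      (∀ v, (μ v).vl.Nodup) ∧
      (∀ v v', v ≠ v' → μ v ≠ Term.var v → μ v' ≠ Term.var v' →
        ∀ w, w ∈ (μ v).vl → w ∉ (μ v').vl) ∧
      t.subst μ = t := by
  classical
  set μ : Subst F V := fun v => if v = x then t else μ' v with hμ
  have e1 : μ x = t := by simp [hμ]
  have e2 : ∀ v, v ≠ x → μ v = μ' v := by intro v hv; simp [hμ, hv]
  have hfix : ∀ w, w ∉ allV rest → μ' w = Term.var w := fun w hw => cprops_support hp hw
  have K1a : t.subst μ = t := by
    have : t.subst μ = t.subst Term.var := by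
      apply subst_congr
      intro v hv
      have hvt : v ∈ vl t := mem_vl.2 hv
      have hvx : v ≠ x := fun hh => hxt (hh ▸ hvt)
      rw [e2 v hvx, hfix v (htr v hvt)]
    rw [this, subst_id]
  have hrs : ∀ s : Term F V, (∀ w, w ∈ vl s → w ∈ allV rest) → s.subst μ = s.subst μ' := by
    intro s hs
    apply subst_congr
    intro v hv
    have hvs := hs v (mem_vl.2 hv)
    have hvx : v ≠ x := fun hh => hxr (hh ▸ hvs)
    exact e2 v hvx
  have hmem1 : ∀ e ∈ rest, ∀ w, w ∈ vl (e : Eqn F V).1 → w ∈ allV rest := by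
    intro e he w hw; simp only [allV, List.mem_flatMap]; exact ⟨e, he, by simp [hw]⟩
  have hmem2 : ∀ e ∈ rest, ∀ w, w ∈ vl (e : Eqn F V).2 → w ∈ allV rest := by
    intro e he w hw; simp only [allV, List.mem_flatMap]; exact ⟨e, he, by simp [hw]⟩
  refine ⟨μ, e1, ?_, ?_, ?_, ?_, ?_, K1a⟩
  · intro e he
    rw [hrs e.1 (hmem1 e he), hrs e.2 (hmem2 e he)]
    exact hp.unif e he
  · intro τ' hx hrest v
    by_cases hv : v = x
    · subst hv; rw [e1]; exact hx
    · rw [e2 v hv]; exact hp.mgu τ' hrest v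
  · intro v hv
    by_cases hvx : v = x
    · exact Or.inl hvx
    · exact Or.inr ⟨e2 v hvx, by rw [← e2 v hvx]; exact hv⟩
  · intro v
    by_cases hvx : v = x
    · subst hvx; rw [e1]; exact hndt
    · rw [e2 v hvx]; exact hp.nd v
  · intro v v' hne hv hv' w hw
    by_cases hvx : v = x
    · have hv'x : v' ≠ x := fun hh => hne (hvx.trans hh.symm)
      rw [hvx, e1] at hw
      rw [e2 v' hv'x] at hv' ⊢
      intro hw'
      exact htr w hw (cprops_range hp hv' hw')
    · by_cases hv'x : v' = x
      · subst hv'x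
        rw [e1]
        rw [e2 v hvx] at hw hv
        intro hw'
        exact htr w hw' (cprops_range hp hv hw)
      · rw [e2 v hvx] at hw hv
        rw [e2 v' hv'x]
        rw [e2 v' hv'x] at hv'
        exact hp.disj v v' hne hv hv' w hw

theorem cprops_exists [DecidableEq V] :
    ∀ (N : ℕ) (pairs : List (Eqn F V)) (τ : Subst F V),
      (pairs.map (fun e => tsize e.1 + tsize e.2)).sum ≤ N →
      (∀ e ∈ pairs, e.1.subst τ = e.2.subst τ) →
      (allV pairs).Nodup →
      ∃ μ : Subst F V, CProps μ pairs := by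
  intro N
  induction N with
  | zero =>
      intro pairs τ hm hτ hnd
      cases pairs with
      | nil => exact ⟨Term.var, cprops_nil⟩
      | cons e rest =>
          exfalso
          simp only [List.map_cons, List.sum_cons] at hm
          have := tsize_pos e.1; omega
  | succ N IH =>
      intro pairs τ hm hτ hnd
      cases pairs with
      | nil => exact ⟨Term.var, cprops_nil⟩
      | cons e rest =>
      obtain ⟨u, h⟩ := e
      rcases u with x | ⟨f, us⟩
      · -- selected equation is (var x, h)
        rw [allV_cons] at hnd
        simp only [vl_var, List.singleton_append] at hnd
        rw [List.nodup_cons] at hnd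
        obtain ⟨hx1, hnd2⟩ := hnd
        rw [List.nodup_append] at hnd2
        obtain ⟨hndh, hndr, hdisj⟩ := hnd2
        have hxh : x ∉ vl h := fun hh => hx1 (List.mem_append_left _ hh)
        have hxr : x ∉ allV rest := fun hh => hx1 (List.mem_append_right _ hh)
        have htr : ∀ w, w ∈ vl h → w ∉ allV rest := fun w hw hw' => hdisj w hw w hw' rfl
        have hm' : (rest.map (fun e => tsize e.1 + tsize e.2)).sum ≤ N := by
          simp only [List.map_cons, List.sum_cons, tsize_var] at hm
          omega
        obtain ⟨μ', hp'⟩ := IH rest τ hm' (fun e he => hτ e (List.mem_cons_of_mem _ he)) hndr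
        obtain ⟨μ, e1, hrest, hmgu, hK3, hnd5, hdisj6, hsub⟩ :=
          cprops_extend hp' x h hxh hxr htr hndh
        refine ⟨μ, ?_, ?_, ?_, hnd5, hdisj6⟩
        · intro e he
          rcases List.mem_cons.1 he with rfl | he
          · show (Term.var x).subst μ = h.subst μ
            rw [subst_var, e1, hsub]
          · exact hrest e he
        · intro τ' hτ'' v
          have hx : τ' x = h.subst τ' := by
            have := hτ'' (Term.var x, h) (List.mem_cons_self)
            simpa using this
          exact hmgu τ' hx (fun e he => hτ'' e (List.mem_cons_of_mem _ he)) v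
        · intro v hv
          rcases hK3 v hv with rfl | ⟨heq, hb⟩
          · left
            constructor
            · rw [sideU_cons]; simp
            · intro w hw
              rw [e1] at hw
              rw [sideW_cons]
              exact List.mem_append_left _ hw
          · rcases hp'.side v hb with ⟨h1, h2⟩ | ⟨h1, h2⟩
            · left
              refine ⟨by rw [sideU_cons]; exact List.mem_append_right _ h1, ?_⟩
              intro w hw
              rw [heq] at hw
              rw [sideW_cons]
              exact List.mem_append_right _ (h2 w hw)
            · right
              refine ⟨by rw [sideW_cons]; exact List.mem_append_right _ h1, ?_⟩
              intro w hw
              rw [heq] at hw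
              rw [sideU_cons]
              exact List.mem_append_right _ (h2 w hw)
      · rcases h with y | ⟨f', hs⟩
        · -- selected equation is (app f us, var y)
          rw [allV_cons] at hnd
          simp only [vl_var] at hnd
          rw [List.nodup_append] at hnd
          obtain ⟨hndu, hnd2, hdisj⟩ := hnd
          rw [List.singleton_append, List.nodup_cons] at hnd2
          obtain ⟨hyr, hndr⟩ := hnd2
          have hyt : y ∉ vl (Term.app f us) := by
            intro hh
            exact hdisj y hh y (List.mem_append_left _ (List.mem_singleton_self y)) rfl
          have htr : ∀ w, w ∈ vl (Term.app f us) → w ∉ allV rest := by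
            intro w hw hw'
            exact hdisj w hw w (List.mem_append_right _ hw') rfl
          have hm' : (rest.map (fun e => tsize e.1 + tsize e.2)).sum ≤ N := by
            simp only [List.map_cons, List.sum_cons, tsize_var] at hm
            have := tsize_pos (Term.app f us : Term F V)
            omega
          obtain ⟨μ', hp'⟩ := IH rest τ hm' (fun e he => hτ e (List.mem_cons_of_mem _ he)) hndr
          obtain ⟨μ, e1, hrest, hmgu, hK3, hnd5, hdisj6, hsub⟩ :=
            cprops_extend hp' y (Term.app f us) hyt hyr htr hndu
          refine ⟨μ, ?_, ?_, ?_, hnd5, hdisj6⟩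
          · intro e he
            rcases List.mem_cons.1 he with rfl | he
            · show (Term.app f us).subst μ = (Term.var y).subst μ
              rw [subst_var, e1, hsub]
            · exact hrest e he
          · intro τ' hτ'' v
            have hx : τ' y = (Term.app f us).subst τ' := by
              have := hτ'' (Term.app f us, Term.var y) (List.mem_cons_self)
              simpa using this.symm
            exact hmgu τ' hx (fun e he => hτ'' e (List.mem_cons_of_mem _ he)) v
          · intro v hv
            rcases hK3 v hv with rfl | ⟨heq, hb⟩
            · right
              constructor
              · rw [sideW_cons]; simp
              · intro w hw
                rw [e1] at hw
                rw [sideU_cons]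
                exact List.mem_append_left _ hw
            · rcases hp'.side v hb with ⟨h1, h2⟩ | ⟨h1, h2⟩
              · left
                refine ⟨by rw [sideU_cons]; exact List.mem_append_right _ h1, ?_⟩
                intro w hw
                rw [heq] at hw
                rw [sideW_cons]
                exact List.mem_append_right _ (h2 w hw)
              · right
                refine ⟨by rw [sideW_cons]; exact List.mem_append_right _ h1, ?_⟩
                intro w hw
                rw [heq] at hw
                rw [sideU_cons]
                exact List.mem_append_right _ (h2 w hw)
        · -- both sides applications
          have h0 := hτ (Term.app f us, Term.app f' hs) (List.mem_cons_self)
          simp only [subst_app, app.injEq] at h0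
          obtain ⟨rfl, hmap⟩ := h0
          have hlen : us.length = hs.length := by
            have := congrArg List.length hmap; simpa using this
          set pairs' : List (Eqn F V) := us.zip hs ++ rest with hpairs'
          have hm' : (pairs'.map (fun e => tsize e.1 + tsize e.2)).sum ≤ N := by
            rw [hpairs', List.map_append, List.sum_append, zip_sum hlen]
            simp only [List.map_cons, List.sum_cons, tsize_app] at hm
            omega
          have hτ' : ∀ e ∈ pairs', e.1.subst τ = e.2.subst τ := by
            intro e he
            rcases List.mem_append.1 he with he | he
            · exact zip_rel hmap e he
            · exact hτ e (List.mem_cons_of_mem _ he)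
          have hnd' : (allV pairs').Nodup := by
            have hperm : (allV pairs').Perm ((us.flatMap vl ++ hs.flatMap vl) ++ allV rest) := by
              rw [hpairs', allV_append]
              exact List.Perm.append_right _ (zip_flat_perm hlen)
            apply hperm.symm.nodup
            rw [allV_cons, vl_app, vl_app, ← List.append_assoc] at hnd
            exact hnd
          obtain ⟨μ, hp'⟩ := IH pairs' τ hm' hτ' hnd'
          have eU : sideU pairs' = sideU ((Term.app f us, Term.app f hs) :: rest) := by
            rw [hpairs', sideU_append, sideU_cons, vl_app]
            rw [show sideU (us.zip hs) = (us.zip hs).flatMap (fun e => vl e.1) from rfl]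
            rw [zip_fst_flatMap hlen]
          have eW : sideW pairs' = sideW ((Term.app f us, Term.app f hs) :: rest) := by
            rw [hpairs', sideW_append, sideW_cons, vl_app]
            rw [show sideW (us.zip hs) = (us.zip hs).flatMap (fun e => vl e.2) from rfl]
            rw [zip_snd_flatMap hlen]
          refine ⟨μ, ?_, ?_, ?_, hp'.nd, hp'.disj⟩
          · intro e he
            rcases List.mem_cons.1 he with rfl | he
            · show (Term.app f us).subst μ = (Term.app f hs).subst μ
              simp only [subst_app, app.injEq, true_and]
              exact map_eq_of_zip hlen (fun p hp => hp'.unif p (List.mem_append_left _ hp))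
            · exact hp'.unif e (List.mem_append_right _ he)
          · intro τ' hτ'' v
            apply hp'.mgu τ'
            intro e he
            rcases List.mem_append.1 he with he | he
            · have h1 := hτ'' _ (List.mem_cons_self)
              simp only [subst_app, app.injEq, true_and] at h1
              exact zip_rel h1 e he
            · exact hτ'' e (List.mem_cons_of_mem _ he)
          · intro v hv
            rw [← eU, ← eW]
            exact hp'.side v hv

end LinU

namespace LinU
open Term

variable {F V : Type}

theorem subst_eq_self {t : Term F V} {σ : Subst F V} (h : t.subst σ = t) :
    ∀ w, VarIn w t → σ w = Term.var w := by
  intro w hw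
  exact match_unique (σ' := Term.var) (h.trans (subst_id t).symm) w hw

theorem mgu_factor {A H : Term F V} {μ θ : Subst F V}
    (hμ : IsMGUPair μ A H) (hθ : IsMGUPair θ A H) :
    ∃ η : Subst F V, (∀ t : Term F V, t.subst θ = (t.subst μ).subst η) ∧
      (∀ w, (∃ v, VarIn w (μ v)) → ∃ x, η w = Term.var x) ∧
      (∀ w w', (∃ v, VarIn w (μ v)) → (∃ v, VarIn w' (μ v)) → η w = η w' → w = w') := by
  obtain ⟨η, hη⟩ := hμ.2 θ hθ.1
  obtain ⟨η', hη'⟩ := hθ.2 μ hμ.1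
  have key : ∀ v, (μ v).subst (η.comp η') = μ v := by
    intro v
    conv_rhs => rw [hη']
    show (μ v).subst (η.comp η') = (θ v).subst η'
    rw [show θ v = (μ v).subst η by rw [hη]; rfl]
    rw [subst_comp_eq]
  have fix : ∀ v w, VarIn w (μ v) → (η w).subst η' = Term.var w := by
    intro v w hw
    have := subst_eq_self (key v) w hw
    exact this
  have hvar : ∀ w, (∃ v, VarIn w (μ v)) → ∃ x, η w = Term.var x := by
    rintro w ⟨v, hw⟩
    cases hh : η w with
    | var x => exact ⟨x, rfl⟩
    | app g ts =>
        exfalso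
        have := fix v w hw
        rw [hh] at this
        simp only [subst_app] at this
        cases this
  refine ⟨η, ?_, hvar, ?_⟩
  · intro t
    rw [hη, ← subst_comp_eq]
  · rintro w w' ⟨v, hw⟩ ⟨v', hw'⟩ heq
    have h1 := fix v w hw
    have h2 := fix v' w' hw'
    rw [heq] at h1
    rw [h1] at h2
    exact Term.var.inj h2

theorem nodup_flatMap_vl [DecidableEq V] {l : List V} {η : Subst F V} (hnd : l.Nodup)
    (hvar : ∀ w ∈ l, ∃ x, η w = Term.var x)
    (hinj : ∀ w ∈ l, ∀ w' ∈ l, η w = η w' → w = w') :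
    (l.flatMap (fun w => (η w).vl)).Nodup := by
  induction l with
  | nil => simp
  | cons a l ih =>
      rw [List.flatMap_cons]
      rw [List.nodup_cons] at hnd
      obtain ⟨x, hx⟩ := hvar a (List.mem_cons_self)
      apply List.Nodup.append
      · rw [hx]; simp
      · exact ih hnd.2 (fun w hw => hvar w (List.mem_cons_of_mem _ hw))
          (fun w hw w' hw' => hinj w (List.mem_cons_of_mem _ hw) w' (List.mem_cons_of_mem _ hw'))
      · intro w hw hw'
        rw [hx] at hw
        simp only [vl_var, List.mem_singleton] at hw
        subst hw
        rw [List.mem_flatMap] at hw'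
        obtain ⟨b, hb, hwb⟩ := hw'
        obtain ⟨xb, hxb⟩ := hvar b (List.mem_cons_of_mem _ hb)
        rw [hxb] at hwb
        simp only [vl_var, List.mem_singleton] at hwb
        subst hwb
        have : a = b := hinj a (List.mem_cons_self) b (List.mem_cons_of_mem _ hb)
          (by rw [hx, hxb])
        exact hnd.1 (this ▸ hb)

/-- An atom is good: linear (nodup variable list), an application whose first
argument is ground. -/
def Good (A : Term F V) : Prop :=
  A.vl.Nodup ∧ ∃ (p : F) (g : Term F V) (rest : List (Term F V)),
    A = Term.app p (g :: rest) ∧ g.vl = []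

theorem good_transfer [DecidableEq V] {B : Term F V} {μ θ η : Subst F V}
    (hall : ∀ t : Term F V, t.subst θ = (t.subst μ).subst η)
    (hvar : ∀ w, (∃ v, VarIn w (μ v)) → ∃ x, η w = Term.var x)
    (hinj : ∀ w w', (∃ v, VarIn w (μ v)) → (∃ v, VarIn w' (μ v)) → η w = η w' → w = w')
    (hgood : Good (B.subst μ)) : Good (B.subst θ) := by
  rw [hall B]
  obtain ⟨hnd, p, g, rest, heq, hg⟩ := hgood
  have hmemμ : ∀ w, w ∈ (B.subst μ).vl → ∃ v, VarIn w (μ v) := by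
    intro w hw
    rw [vl_subst, List.mem_flatMap] at hw
    obtain ⟨v, _, hw⟩ := hw
    exact ⟨v, mem_vl.1 hw⟩
  constructor
  · rw [vl_subst]
    exact nodup_flatMap_vl hnd (fun w hw => hvar w (hmemμ w hw))
      (fun w hw w' hw' => hinj w w' (hmemμ w hw) (hmemμ w' hw'))
  · refine ⟨p, g.subst η, rest.map (fun t => t.subst η), ?_, ?_⟩
    · rw [heq]; simp
    · rw [vl_subst, hg]; simp

end LinU

namespace LinU
open Term

variable {F V : Type}

theorem nodup_flatMap_gen {V : Type} {l : List V} {f : V → List V}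
    (hnd : l.Nodup) (h1 : ∀ v ∈ l, (f v).Nodup)
    (h2 : ∀ v ∈ l, ∀ v' ∈ l, v ≠ v' → ∀ w, w ∈ f v → w ∉ f v') :
    (l.flatMap f).Nodup := by
  induction l with
  | nil => simp
  | cons a l ih =>
      rw [List.flatMap_cons]
      rw [List.nodup_cons] at hnd
      apply List.Nodup.append
      · exact h1 a (List.mem_cons_self)
      · exact ih hnd.2 (fun v hv => h1 v (List.mem_cons_of_mem _ hv))
          (fun v hv v' hv' => h2 v (List.mem_cons_of_mem _ hv) v' (List.mem_cons_of_mem _ hv'))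
      · intro w hw hw'
        rw [List.mem_flatMap] at hw'
        obtain ⟨b, hb, hwb⟩ := hw'
        have hab : a ≠ b := fun h => hnd.1 (h ▸ hb)
        exact h2 a (List.mem_cons_self) b (List.mem_cons_of_mem _ hb) hab w hw hwb

theorem nodup_subst_cp [DecidableEq V] {B : Term F V} {μ : Subst F V}
    {pairs : List (Eqn F V)} (hp : CProps μ pairs)
    (hfr : ∀ w ∈ B.vl, w ∉ sideW pairs) (hndB : B.vl.Nodup) :
    (B.subst μ).vl.Nodup := by
  rw [vl_subst]
  apply nodup_flatMap_gen hndB (fun v _ => hp.nd v)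
  intro v hv v' hv' hne w hw hw'
  by_cases b1 : μ v = Term.var v
  · rw [b1] at hw
    simp only [vl_var, List.mem_singleton] at hw
    subst hw
    by_cases b2 : μ v' = Term.var v'
    · rw [b2] at hw'
      simp only [vl_var, List.mem_singleton] at hw'
      exact hne hw'
    · rcases hp.side v' b2 with ⟨_, h2⟩ | ⟨h1, _⟩
      · exact hfr w hv (h2 _ hw')
      · exact hfr v' hv' h1
  · by_cases b2 : μ v' = Term.var v'
    · rw [b2] at hw'
      simp only [vl_var, List.mem_singleton] at hw'
      subst hw'
      rcases hp.side v b1 with ⟨_, h2⟩ | ⟨h1, _⟩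
      · exact hfr w hv' (h2 _ hw)
      · exact hfr v hv h1
    · exact hp.disj v v' hne b1 b2 w hw hw'

theorem sideW_swap [DecidableEq V] (pairs : List (Eqn F V)) :
    sideW (pairs.map Prod.swap) = sideU pairs := by
  simp [sideW, sideU, List.flatMap_map, Prod.swap]

theorem sideU_swap [DecidableEq V] (pairs : List (Eqn F V)) :
    sideU (pairs.map Prod.swap) = sideW pairs := by
  simp [sideU, sideW, List.flatMap_map, Prod.swap]

theorem cprops_swap [DecidableEq V] {μ : Subst F V} {pairs : List (Eqn F V)}
    (hp : CProps μ pairs) : CProps μ (pairs.map Prod.swap) := by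
  refine ⟨?_, ?_, ?_, hp.nd, hp.disj⟩
  · intro e he
    rw [List.mem_map] at he
    obtain ⟨e', he', rfl⟩ := he
    exact (hp.unif e' he').symm
  · intro τ' hτ' v
    apply hp.mgu τ'
    intro e he
    exact (hτ' e.swap (List.mem_map_of_mem he)).symm
  · intro v hv
    rw [sideU_swap, sideW_swap]
    exact (hp.side v hv).symm

theorem body_lin [DecidableEq V] {b : Term F V} {μ : Subst F V}
    {pairs : List (Eqn F V)} (hp : CProps μ pairs)
    (hfr : ∀ w ∈ b.vl, w ∉ sideU pairs) (hndb : b.vl.Nodup) :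
    (b.subst μ).vl.Nodup := by
  apply nodup_subst_cp (cprops_swap hp) _ hndb
  rw [sideW_swap]
  exact hfr

theorem good_subst_cp [DecidableEq V] {B : Term F V} {μ : Subst F V}
    {pairs : List (Eqn F V)} (hp : CProps μ pairs)
    (hfr : ∀ w ∈ B.vl, w ∉ sideW pairs) (hgood : Good B) : Good (B.subst μ) := by
  obtain ⟨hnd, p, g, rest, heq, hg⟩ := hgood
  refine ⟨nodup_subst_cp hp hfr hnd, p, g.subst μ, rest.map (fun t => t.subst μ), ?_, ?_⟩
  · rw [heq]; simp
  · rw [vl_subst, hg]; simp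

theorem cprops_mgu_pair [DecidableEq V] {A H : Term F V} {μ : Subst F V}
    (hp : CProps μ [(A, H)]) : IsMGUPair μ A H := by
  constructor
  · exact hp.unif (A, H) (List.mem_singleton_self _)
  · intro τ' hτ'
    refine ⟨τ', funext fun v => ?_⟩
    apply hp.mgu τ' _ v
    intro e he
    rw [List.mem_singleton] at he
    subst he
    exact hτ'

theorem make_mgu [DecidableEq V] {A H : Term F V} {θ : Subst F V}
    (hu : A.subst θ = H.subst θ) (hndA : A.vl.Nodup) (hndH : H.vl.Nodup)
    (hdisj : ∀ w ∈ H.vl, w ∉ A.vl) :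
    ∃ μ : Subst F V, CProps μ [(A, H)] ∧ IsMGUPair μ A H := by
  have hnd : (allV [(A, H)]).Nodup := by
    have : allV [(A, H)] = A.vl ++ H.vl := by simp [allV]
    rw [this]
    exact hndA.append hndH (fun a ha ha' => hdisj a ha' ha)
  obtain ⟨μ, hp⟩ := cprops_exists _ [(A, H)] θ le_rfl
    (by intro e he; rw [List.mem_singleton] at he; subst he; exact hu) hnd
  exact ⟨μ, hp, cprops_mgu_pair hp⟩

theorem q_side_good [DecidableEq V] {B : Term F V} {μ η θ : Subst F V}
    {pairs : List (Eqn F V)} (hp : CProps μ pairs)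
    (hT : ∀ t : Term F V, t.subst θ = (t.subst μ).subst η)
    (hvar : ∀ w, (∃ v, VarIn w (μ v)) → ∃ x, η w = Term.var x)
    (hinj : ∀ w w', (∃ v, VarIn w (μ v)) → (∃ v, VarIn w' (μ v)) → η w = η w' → w = w')
    (hfr : ∀ w ∈ B.vl, w ∉ sideW pairs)
    (hgood : Good B) : Good (B.subst θ) :=
  good_transfer hT hvar hinj (good_subst_cp hp hfr hgood)

end LinU

theorem step_preserve {Q Q' : List (Term NQF ℕ)}
    (hstep : SLDStep NQUEENS Q Q') (hQ : ∀ A ∈ Q, LinU.Good A) :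
    ∀ A ∈ Q', LinU.Good A := by
  classical
  cases hstep with
  | @step Q1 Q2 A c σ θ hc hren hfresh hmgu =>
    obtain ⟨ρ, hρ⟩ := hren
    have hinjρ : ∀ i j : ℕ, ρ i = ρ j ↔ i = j :=
      fun i j => ⟨fun h => ρ.injective h, fun h => h ▸ rfl⟩
    have hfresh' : ∀ w, (c.rename σ).varIn w → ∀ B ∈ Q1 ++ A :: Q2, w ∉ B.vl := by
      intro w hw B hB hwB
      exact hfresh w hw ⟨B, hB, Term.mem_vl.1 hwB⟩
    have hAmem : A ∈ Q1 ++ A :: Q2 := by simp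
    have hmem1 : ∀ {B0 : Term NQF ℕ}, B0 ∈ Q1 → B0 ∈ Q1 ++ A :: Q2 :=
      fun h => List.mem_append_left _ h
    have hmem2 : ∀ {B0 : Term NQF ℕ}, B0 ∈ Q2 → B0 ∈ Q1 ++ A :: Q2 :=
      fun h => List.mem_append_right _ (List.mem_cons_of_mem _ h)
    obtain ⟨hndA, p, g, rest, hAeq, hg⟩ := hQ A hAmem
    have hgg : g.Ground := Term.ground_iff_vl_nil.2 hg
    have hsideW : ∀ (Hd : Term NQF ℕ), LinU.sideW [(A, Hd)] = Hd.vl := by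
      intro Hd; simp [LinU.sideW]
    have hsideU : ∀ (Hd : Term NQF ℕ), LinU.sideU [(A, Hd)] = A.vl := by
      intro Hd; simp [LinU.sideU]
    have hfrQ : ∀ (Hd : Term NQF ℕ), (∀ w ∈ Hd.vl, Term.VarIn w (c.rename σ).head) →
        ∀ B0 ∈ Q1 ++ A :: Q2, ∀ w ∈ B0.vl, w ∉ LinU.sideW [(A, Hd)] := by
      intro Hd hH B0 hB0 w hwB hwS
      rw [hsideW] at hwS
      exact hfresh' w (Or.inl (hH w hwS)) B0 hB0 hwB
    have hfrb : ∀ (Hd b0 : Term NQF ℕ), b0 ∈ (c.rename σ).body →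
        ∀ w ∈ b0.vl, w ∉ LinU.sideU [(A, Hd)] := by
      intro Hd b0 hb0 w hwb hwS
      rw [hsideU] at hwS
      exact (hfresh' w (Or.inr ⟨b0, hb0, Term.mem_vl.1 hwb⟩) A hAmem) hwS
    have hdisjHA : ∀ w ∈ ((c.rename σ).head).vl, w ∉ A.vl :=
      fun w hw => hfresh' w (Or.inl (Term.mem_vl.1 hw)) A hAmem
    intro B' hB'
    rw [List.mem_map] at hB'
    obtain ⟨B, hB, rfl⟩ := hB'
    simp only [NQUEENS, List.mem_cons, List.not_mem_nil, or_false] at hc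
    rcases hc with rfl | rfl | rfl | rfl
    · -- clause1
      have hHeq : (clause1.rename σ).head =
          Term.app NQF.pqs [Term.app NQF.zero [], Term.var (ρ 0), Term.var (ρ 1),
            Term.var (ρ 2)] := by
        simp [clause1, Clause.rename, nqPqs, nqZero, hρ]
      have hndH : ((clause1.rename σ).head).vl.Nodup := by
        rw [hHeq]; simp [hinjρ]
      obtain ⟨μ, hp, hμmgu⟩ := LinU.make_mgu hmgu.1 hndA hndH hdisjHA
      obtain ⟨η, hT, hvar, hinj⟩ := LinU.mgu_factor hμmgu hmgu
      have hbody : (clause1.rename σ).body = [] := by simp [clause1, Clause.rename]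
      rw [hbody] at hB
      have hfr := hfrQ ((clause1.rename σ).head) (fun w hw => Term.mem_vl.1 hw)
      rcases List.mem_append.1 hB with h12 | h2
      · rcases List.mem_append.1 h12 with h1 | hb
        · exact LinU.q_side_good hp hT hvar hinj (hfr B (hmem1 h1)) (hQ B (hmem1 h1))
        · exact absurd hb List.not_mem_nil
      · exact LinU.q_side_good hp hT hvar hinj (hfr B (hmem2 h2)) (hQ B (hmem2 h2))
    · -- clause2
      have hHeq : (clause2.rename σ).head =
          Term.app NQF.pqs [Term.app NQF.succ [Term.var (ρ 0)], Term.var (ρ 1),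
            Term.var (ρ 2), Term.app NQF.cons [Term.var (ρ 4), Term.var (ρ 3)]] := by
        simp [clause2, Clause.rename, nqPqs, nqS, nqCons, hρ]
      have hndH : ((clause2.rename σ).head).vl.Nodup := by
        rw [hHeq]; simp [hinjρ]
      obtain ⟨μ, hp, hμmgu⟩ := LinU.make_mgu hmgu.1 hndA hndH hdisjHA
      obtain ⟨η, hT, hvar, hinj⟩ := LinU.mgu_factor hμmgu hmgu
      have hbody : (clause2.rename σ).body =
          [Term.app NQF.pqs [Term.var (ρ 0), Term.var (ρ 1),
             Term.app NQF.cons [Term.var (ρ 5), Term.var (ρ 2)], Term.var (ρ 3)],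
           Term.app NQF.pq [Term.app NQF.succ [Term.var (ρ 0)], Term.var (ρ 1),
             Term.var (ρ 2), Term.var (ρ 3)]] := by
        simp [clause2, Clause.rename, nqPqs, nqPq, nqS, nqCons, hρ]
      -- first argument of the head instantiated: μ (ρ 0) is ground
      have huAH := hp.unif (A, (clause2.rename σ).head) (List.mem_singleton_self _)
      rw [hAeq, hHeq] at huAH
      simp only [Term.subst_app, List.map_cons, List.map_nil, Term.subst_var,
        Term.app.injEq, List.cons.injEq] at huAH
      obtain ⟨-, hgs, -⟩ := huAH
      rw [Term.ground_subst hgg] at hgs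
      have hμ0 : (μ (ρ 0)).vl = [] := by
        have := congrArg Term.vl hgs
        rw [hg] at this
        simpa using this.symm
      have hfr := hfrQ ((clause2.rename σ).head) (fun w hw => Term.mem_vl.1 hw)
      rcases List.mem_append.1 hB with h12 | h2
      · rcases List.mem_append.1 h12 with h1 | hb
        · exact LinU.q_side_good hp hT hvar hinj (hfr B (hmem1 h1)) (hQ B (hmem1 h1))
        · have hbodycase : ∀ b0 ∈ (clause2.rename σ).body, ∀ (q : NQF) (g0 : Term NQF ℕ)
              (args : List (Term NQF ℕ)), b0.subst μ = Term.app q (g0 :: args) →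
              g0.vl = [] → b0.vl.Nodup → LinU.Good (b0.subst θ) := by
            intro b0 hmemb q g0 args hshape hg0 hndb
            apply LinU.good_transfer hT hvar hinj
            exact ⟨LinU.body_lin hp (hfrb _ b0 hmemb) hndb, q, g0, args, hshape, hg0⟩
          rw [hbody] at hb
          simp only [List.mem_cons, List.not_mem_nil, or_false] at hb
          rcases hb with hb | hb
          · exact hbodycase B (by rw [hbody, hb]; simp) NQF.pqs (μ (ρ 0))
              [μ (ρ 1), Term.app NQF.cons [μ (ρ 5), μ (ρ 2)], μ (ρ 3)]
              (by rw [hb]; simp) hμ0 (by rw [hb]; simp [hinjρ])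
          · exact hbodycase B (by rw [hbody, hb]; simp) NQF.pq (Term.app NQF.succ [μ (ρ 0)])
              [μ (ρ 1), μ (ρ 2), μ (ρ 3)]
              (by rw [hb]; simp) (by simp [hμ0]) (by rw [hb]; simp [hinjρ])
      · exact LinU.q_side_good hp hT hvar hinj (hfr B (hmem2 h2)) (hQ B (hmem2 h2))
    · -- clause3
      have hHeq : (clause3.rename σ).head =
          Term.app NQF.pq [Term.var (ρ 0),
            Term.app NQF.cons [Term.var (ρ 0), Term.var (ρ 1)],
            Term.app NQF.cons [Term.var (ρ 0), Term.var (ρ 2)],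
            Term.app NQF.cons [Term.var (ρ 0), Term.var (ρ 3)]] := by
        simp [clause3, Clause.rename, nqPq, nqCons, hρ]
      set μ1 : Subst NQF ℕ := fun v => if v = ρ 0 then g else Term.var v with hμ1
      have hμ1y : μ1 (ρ 0) = g := by simp [hμ1]
      have hμ1v : ∀ v, v ≠ ρ 0 → μ1 v = Term.var v := by intro v hv; simp [hμ1, hv]
      -- applying μ1 to a term avoiding ρ 0 does nothing
      have hid1 : ∀ t : Term NQF ℕ, (ρ 0) ∉ t.vl → t.subst μ1 = t := by
        intro t ht
        rw [show t.subst μ1 = t.subst Term.var from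
          Term.subst_congr (fun v hv => hμ1v v (fun hh => ht (hh ▸ Term.mem_vl.2 hv)))]
        exact Term.subst_id t
      -- every unifier τ' of (A, head) satisfies τ' (ρ 0) = g
      have hτy : ∀ τ' : Subst NQF ℕ, A.subst τ' = ((clause3.rename σ).head).subst τ' →
          τ' (ρ 0) = g := by
        intro τ' hu
        rw [hAeq, hHeq] at hu
        simp only [Term.subst_app, List.map_cons, List.map_nil, Term.subst_var,
          Term.app.injEq, List.cons.injEq] at hu
        obtain ⟨-, hgs, -⟩ := hu
        rw [Term.ground_subst hgg] at hgs
        exact hgs.symm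
      -- unifiers of (A, head) unify (A, head.subst μ1)
      have hswitch : ∀ τ' : Subst NQF ℕ, A.subst τ' = ((clause3.rename σ).head).subst τ' →
          A.subst τ' = (((clause3.rename σ).head).subst μ1).subst τ' := by
        intro τ' hu
        rw [Term.subst_comp_eq]
        rw [show ((clause3.rename σ).head).subst (μ1.comp τ') =
            ((clause3.rename σ).head).subst τ' from Term.subst_congr ?_]
        · exact hu
        · intro v _
          show (μ1 v).subst τ' = τ' v
          by_cases hv : v = ρ 0
          · subst hv
            rw [hμ1y, Term.ground_subst hgg, hτy τ' hu]
          · rw [hμ1v v hv, Term.subst_var]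
      have hH'eq : ((clause3.rename σ).head).subst μ1 =
          Term.app NQF.pq [g,
            Term.app NQF.cons [g, Term.var (ρ 1)],
            Term.app NQF.cons [g, Term.var (ρ 2)],
            Term.app NQF.cons [g, Term.var (ρ 3)]] := by
        rw [hHeq]
        simp only [Term.subst_app, List.map_cons, List.map_nil, Term.subst_var, hμ1y]
        rw [hμ1v (ρ 1) (fun h => by simpa [hinjρ] using h),
            hμ1v (ρ 2) (fun h => by simpa [hinjρ] using h),
            hμ1v (ρ 3) (fun h => by simpa [hinjρ] using h)]
      have hndH' : (((clause3.rename σ).head).subst μ1).vl.Nodup := by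
        rw [hH'eq]; simp [hg, hinjρ]
      have hH'sub : ∀ w ∈ (((clause3.rename σ).head).subst μ1).vl,
          Term.VarIn w ((clause3.rename σ).head) := by
        intro w hw
        rw [hH'eq] at hw
        simp only [Term.vl_app, List.flatMap_cons, List.flatMap_nil, Term.vl_var, hg] at hw
        apply Term.mem_vl.1
        rw [hHeq]
        simp only [Term.vl_app, List.flatMap_cons, List.flatMap_nil, Term.vl_var]
        simp at hw ⊢
        tauto
      have hdisjH'A : ∀ w ∈ (((clause3.rename σ).head).subst μ1).vl, w ∉ A.vl :=
        fun w hw => hfresh' w (Or.inl (hH'sub w hw)) A hAmem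
      obtain ⟨μ2, hp2, hμ2mgu⟩ :=
        LinU.make_mgu (hswitch θ hmgu.1) hndA hndH' hdisjH'A
      -- the composed substitution is an mgu of (A, head)
      have hfullmgu : IsMGUPair (μ1.comp μ2) A ((clause3.rename σ).head) := by
        constructor
        · show A.subst (μ1.comp μ2) = ((clause3.rename σ).head).subst (μ1.comp μ2)
          rw [← Term.subst_comp_eq, ← Term.subst_comp_eq]
          have hA1 : A.subst μ1 = A := by
            apply hid1
            intro hmem
            exact hfresh' (ρ 0) (Or.inl (Term.mem_vl.1 (by rw [hHeq]; simp))) A hAmem hmem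
          rw [hA1]
          exact hp2.unif (A, ((clause3.rename σ).head).subst μ1) (List.mem_singleton_self _)
        · intro τ' hτ'
          refine ⟨τ', funext fun v => ?_⟩
          show τ' v = ((μ1 v).subst μ2).subst τ'
          by_cases hv : v = ρ 0
          · subst hv
            rw [hμ1y, Term.ground_subst hgg, Term.ground_subst hgg]
            exact hτy τ' hτ'
          · rw [hμ1v v hv, Term.subst_var]
            apply hp2.mgu τ' _ v
            intro e he
            rw [List.mem_singleton] at he
            subst he
            exact hswitch τ' hτ'
      obtain ⟨η, hT, hvar, hinj⟩ := LinU.mgu_factor hfullmgu hmgu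
      have hbody : (clause3.rename σ).body = [] := by simp [clause3, Clause.rename]
      rw [hbody] at hB
      have hfr := hfrQ (((clause3.rename σ).head).subst μ1) hH'sub
      have hqcase : ∀ B0 : Term NQF ℕ, B0 ∈ Q1 ++ A :: Q2 →
          LinU.Good (B0.subst θ) := by
        intro B0 hB0
        apply LinU.good_transfer hT hvar hinj
        have hB0μ : B0.subst (μ1.comp μ2) = B0.subst μ2 := by
          rw [← Term.subst_comp_eq]
          rw [show B0.subst μ1 = B0 from hid1 B0 ?_]
          intro hmem
          exact hfresh' (ρ 0) (Or.inl (Term.mem_vl.1 (by rw [hHeq]; simp))) B0 hB0 hmem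
        rw [hB0μ]
        exact LinU.good_subst_cp hp2 (hfr B0 hB0) (hQ B0 hB0)
      rcases List.mem_append.1 hB with h12 | h2
      · rcases List.mem_append.1 h12 with h1 | hb
        · exact hqcase B (hmem1 h1)
        · exact absurd hb List.not_mem_nil
      · exact hqcase B (hmem2 h2)
    · -- clause4
      have hHeq : (clause4.rename σ).head =
          Term.app NQF.pq [Term.var (ρ 0),
            Term.app NQF.cons [Term.var (ρ 4), Term.var (ρ 1)],
            Term.app NQF.cons [Term.var (ρ 5), Term.var (ρ 2)],
            Term.app NQF.cons [Term.var (ρ 6), Term.var (ρ 3)]] := by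
        simp [clause4, Clause.rename, nqPq, nqCons, hρ]
      have hndH : ((clause4.rename σ).head).vl.Nodup := by
        rw [hHeq]; simp [hinjρ]
      obtain ⟨μ, hp, hμmgu⟩ := LinU.make_mgu hmgu.1 hndA hndH hdisjHA
      obtain ⟨η, hT, hvar, hinj⟩ := LinU.mgu_factor hμmgu hmgu
      have hbody : (clause4.rename σ).body =
          [Term.app NQF.pq [Term.var (ρ 0), Term.var (ρ 1), Term.var (ρ 2),
            Term.var (ρ 3)]] := by
        simp [clause4, Clause.rename, nqPq, hρ]
      have huAH := hp.unif (A, (clause4.rename σ).head) (List.mem_singleton_self _)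
      rw [hAeq, hHeq] at huAH
      simp only [Term.subst_app, List.map_cons, List.map_nil, Term.subst_var,
        Term.app.injEq, List.cons.injEq] at huAH
      obtain ⟨-, hgs, -⟩ := huAH
      rw [Term.ground_subst hgg] at hgs
      have hμ0 : (μ (ρ 0)).vl = [] := by rw [← hgs, hg]
      have hfr := hfrQ ((clause4.rename σ).head) (fun w hw => Term.mem_vl.1 hw)
      rcases List.mem_append.1 hB with h12 | h2
      · rcases List.mem_append.1 h12 with h1 | hb
        · exact LinU.q_side_good hp hT hvar hinj (hfr B (hmem1 h1)) (hQ B (hmem1 h1))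
        · rw [hbody, List.mem_singleton] at hb
          have hmemb : B ∈ (clause4.rename σ).body := by rw [hbody, hb]; simp
          have hndb : B.vl.Nodup := by rw [hb]; simp [hinjρ]
          have hlin := LinU.body_lin hp (hfrb _ B hmemb) hndb
          apply LinU.good_transfer hT hvar hinj
          refine ⟨hlin, NQF.pq, μ (ρ 0), [μ (ρ 1), μ (ρ 2), μ (ρ 3)], by rw [hb]; simp, hμ0⟩
      · exact LinU.q_side_good hp hT hvar hinj (hfr B (hmem2 h2)) (hQ B (hmem2 h2))

/-- Let `Q0 = pqs(n,t1,t2,t3)` be a linear query with `n` ground.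
In any SLD-derivation for NQUEENS with `Q0` (under an arbitrary selection rule),
each atom in each query is linear. -/
theorem stmt4 (n t1 t2 t3 : Term NQF ℕ) (hn : n.Ground)
    (hlin : (nqPqs n t1 t2 t3).Linear)
    (Q : List (Term NQF ℕ)) (h : SLDReach NQUEENS [nqPqs n t1 t2 t3] Q) :
    ∀ A ∈ Q, A.Linear := by
  have key : ∀ A ∈ Q, LinU.Good A := by
    induction h with
    | refl =>
        intro A hA
        rw [List.mem_singleton] at hA
        subst hA
        exact ⟨Term.linear_iff_nodup.1 hlin, NQF.pqs, n, [t1, t2, t3], rfl,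
          Term.ground_iff_vl_nil.1 hn⟩
    | tail hreach hstep ih => exact step_preserve hstep ih
  intro A hA
  exact Term.linear_iff_nodup.2 (key A hA).1
end

section
/- Each action of MMA⁻ (actions (1), (3), (4), (5), (5')) replaces the current finite equation set by an i-equivalent one, i.e., one having exactly the same set of i-solutions. -/
variable {F V : Type}

/-! # Possibly infinite terms (i-terms) -/

/-- A labelling of tree positions (finite sequences of natural numbers) by
function symbols or variables. -/
def PreTree (F V : Type) := List ℕ → Option (F ⊕ V)

/-- `t` is an i-term: a finitely branching, possibly infinite ordered tree whose
nodes are labelled by function symbols, with variables allowed at leaves. -/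
structure IsITerm (t : PreTree F V) : Prop where
  root : (t []).isSome
  prefix_closed : ∀ p i, (t (p ++ [i])).isSome → (t p).isSome
  sibling : ∀ p i, (t (p ++ [i + 1])).isSome → (t (p ++ [i])).isSome
  var_leaf : ∀ p v, t p = some (Sum.inr v) → ∀ i, t (p ++ [i]) = none
  fin_branch : ∀ p, ∃ n, ∀ i, n ≤ i → t (p ++ [i]) = none

/-- A possibly infinite term. -/
def ITerm (F V : Type) := { t : PreTree F V // IsITerm t }

/-- An i-substitution maps variables to i-terms. -/
def ISubst (F V : Type) := V → ITerm F V

/-- The i-term (as a tree labelling) obtained by applying an i-substitution to a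
finite term. -/
def Term.iapply (θ : ISubst F V) : Term F V → PreTree F V
  | Term.var x => (θ x).1
  | Term.app f ts =>
    let cs := ts.attach.map fun ⟨t, _⟩ => t.iapply θ
    fun p =>
      match p with
      | [] => some (Sum.inl f)
      | i :: p' =>
        match cs[i]? with
        | some c => c p'
        | none => none

/-- `θ` is an i-solution of the equation set `E`: applying `θ` makes the two sides
of every equation of `E` the same i-term. -/
def ISolution (θ : ISubst F V) (E : EqSet F V) : Prop :=
  ∀ e ∈ E, Term.iapply θ e.1 = Term.iapply θ e.2


/-! ## Auxiliary lemmas -/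

lemma iapply_app (θ : ISubst F V) (f : F) (ts : List (Term F V)) :
    Term.iapply θ (Term.app f ts) = fun p => match p with
      | [] => some (Sum.inl f)
      | i :: p' =>
        match (ts.map (Term.iapply θ))[i]? with
        | some c => c p'
        | none => none := by
  have ha : ts.attach.map (fun x => Term.iapply θ x.1) = ts.map (Term.iapply θ) := by simp
  simp only [Term.iapply, ha]
  rfl

lemma iapply_app_eq_iff {θ : ISubst F V} {f g : F} {ss ts : List (Term F V)}
    (hl : ss.length = ts.length) :
    Term.iapply θ (Term.app f ss) = Term.iapply θ (Term.app g ts) ↔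
      (f = g ∧ ∀ (i : ℕ) (h1 : i < ss.length) (h2 : i < ts.length),
        Term.iapply θ ss[i] = Term.iapply θ ts[i]) := by
  rw [iapply_app, iapply_app]
  constructor
  · intro h
    constructor
    · have := congrFun h []
      simpa using this
    · intro i h1 h2
      funext p
      have := congrFun h (i :: p)
      simpa [List.getElem?_eq_getElem, h1, h2] using this
  · rintro ⟨rfl, h⟩
    funext p
    match p with
    | [] => rfl
    | i :: p' =>
      by_cases hi : i < ss.length
      · have hi' : i < ts.length := hl ▸ hi
        simp only [List.getElem?_map, List.getElem?_eq_getElem, hi, hi']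
        exact congrFun (h i hi hi') p'
      · have hi' : ¬ i < ts.length := hl ▸ hi
        simp [List.getElem?_eq_none, Nat.le_of_not_lt, hi, hi']

lemma replSome_iapply [DecidableEq V] {θ : ISubst F V} {X : V} {t : Term F V}
    (heq : Term.iapply θ (Term.var X) = Term.iapply θ t) :
    ∀ u u', ReplSome X t u u' → Term.iapply θ u = Term.iapply θ u'
  | _, _, .keep v => rfl
  | _, _, .repl => heq
  | _, _, .app (f := f) (ss := ss) (ts := ts) h => by
    have hl : ss.length = ts.length := h.length_eq
    rw [iapply_app_eq_iff hl]
    refine ⟨rfl, fun i h1 h2 => ?_⟩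
    have hr : ReplSome X t ss[i] ts[i] := by
      rw [List.forall₂_iff_get] at h
      exact h.2 i h1 h2
    have : sizeOf ss[i] < 1 + sizeOf ss := by
      have := List.sizeOf_lt_of_mem (ss.getElem_mem h1)
      omega
    exact replSome_iapply heq ss[i] ts[i] hr
termination_by u _ _ => sizeOf u

lemma replSome_subst1 [DecidableEq V] (X : V) (t : Term F V) :
    ∀ u, ReplSome X t u (u.subst (subst1 X t))
  | .var v => by
    by_cases hv : v = X
    · cases hv
      have : (Term.var X).subst (subst1 X t) = t := by simp [Term.subst, subst1]
      rw [this]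
      exact .repl
    · have : (Term.var v).subst (subst1 X t) = Term.var v := by simp [Term.subst, subst1, hv]
      rw [this]
      exact .keep v
  | .app f ts => by
    have : (Term.app f ts).subst (subst1 X t)
        = Term.app f (ts.map (Term.subst (subst1 X t))) := by
      simp [Term.subst]
    rw [this]
    refine .app ?_
    rw [List.forall₂_map_right_iff]
    refine List.forall₂_same.2 fun u hu => ?_
    have : sizeOf u < 1 + sizeOf ts := by
      have := List.sizeOf_lt_of_mem hu
      omega
    exact replSome_subst1 X t u
termination_by u => sizeOf u

lemma subst1_iapply [DecidableEq V] {θ : ISubst F V} {X : V} {t : Term F V}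
    (heq : Term.iapply θ (Term.var X) = Term.iapply θ t) (u : Term F V) :
    Term.iapply θ (u.subst (subst1 X t)) = Term.iapply θ u :=
  (replSome_iapply heq u _ (replSome_subst1 X t u)).symm

/-- Each action of MMA⁻ (actions (1), (3), (4), (5), (5')) replaces
the current equation set by an i-equivalent one: one having exactly the same set of
i-solutions. -/
theorem stmt8 {F V : Type} [DecidableEq V] (l : MLabel F V) (s s' : MState F V)
    (h : MMStepL l s s') (θ : ISubst F V) :
    ISolution θ s.1 ↔ ISolution θ s'.1 := by
  cases h with
  | @decomp E H f ss ts hmem hl =>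
    constructor
    · intro hs e he
      rcases he with he | he
      · exact hs e he.1
      · have happ := hs _ hmem
        rw [iapply_app_eq_iff hl] at happ
        rcases List.mem_iff_getElem.1 he with ⟨i, hi, hie⟩
        have hi1 : i < ss.length := lt_of_lt_of_le hi (by rw [List.length_zip]; omega)
        have hi2 : i < ts.length := hl ▸ hi1
        rw [List.getElem_zip] at hie
        have := happ.2 i hi1 hi2
        rw [show e.1 = ss[i] by rw [← hie], show e.2 = ts[i] by rw [← hie]]
        exact this
    · intro hs e he
      by_cases hee : e = (Term.app f ss, Term.app f ts)
      · subst hee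
        simp only
        rw [iapply_app_eq_iff hl]
        refine ⟨rfl, fun i h1 h2 => ?_⟩
        have hz : (ss[i], ts[i]) ∈ ss.zip ts := by
          rw [List.mem_iff_getElem]
          exact ⟨i, by rw [List.length_zip]; omega, List.getElem_zip ..⟩
        exact hs _ (Or.inr hz)
      · exact hs e (Or.inl ⟨he, hee⟩)
  | @del E H X hmem =>
    constructor
    · intro hs e he; exact hs e he.1
    · intro hs e he
      by_cases hee : e = (Term.var X, Term.var X)
      · subst hee; rfl
      · exact hs e ⟨he, hee⟩
  | @orient E H X t hmem hnv =>
    constructor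
    · intro hs e he
      rcases he with he | he
      · exact hs e he.1
      · have := hs _ hmem
        cases he
        exact this.symm
    · intro hs e he
      by_cases hee : e = (t, Term.var X)
      · subst hee
        exact (hs (Term.var X, t) (Or.inr rfl)).symm
      · exact hs e (Or.inl ⟨he, hee⟩)
  | @elim E H X t hmem hne hocc =>
    constructor
    · intro hs e he
      rcases he with he | he
      · subst he; exact hs _ hmem
      · rcases he with ⟨e0, he0, rfl⟩
        have heq := hs _ hmem
        have h1 := subst1_iapply heq e0.1
        have h2 := subst1_iapply heq e0.2
        simp only [Eqn.subst]
        rw [h1, h2]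
        exact hs e0 he0.1
    · intro hs e he
      have heq : Term.iapply θ (Term.var X) = Term.iapply θ t :=
        hs (Term.var X, t) (Set.mem_insert _ _)
      by_cases hee : e = (Term.var X, t)
      · subst hee; exact heq
      · have hmem' : Eqn.subst (subst1 X t) e ∈
            insert (Term.var X, t) (Eqn.subst (subst1 X t) '' (E \ {(Term.var X, t)})) :=
          Set.mem_insert_of_mem _ ⟨e, ⟨he, hee⟩, rfl⟩
        have := hs _ hmem'
        simp only [Eqn.subst] at this
        rw [subst1_iapply heq e.1, subst1_iapply heq e.2] at this
        exact this
  | @elim' E H X t g hmem hne hocc hX hg =>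
    constructor
    · intro hs e he
      rcases he with he | he
      · subst he; exact hs _ hmem
      · rcases he with ⟨e0, he0, rfl⟩
        have heq := hs _ hmem
        have hr := hg e0 he0
        have h1 := replSome_iapply heq e0.1 (g e0).1 hr.1
        have h2 := replSome_iapply heq e0.2 (g e0).2 hr.2
        rw [← h1, ← h2]
        exact hs e0 he0.1
    · intro hs e he
      have heq : Term.iapply θ (Term.var X) = Term.iapply θ t :=
        hs (Term.var X, t) (Set.mem_insert _ _)
      by_cases hee : e = (Term.var X, t)
      · subst hee; exact heq
      · have he' : e ∈ E \ {(Term.var X, t)} := ⟨he, hee⟩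
        have hmem' : g e ∈ insert (Term.var X, t) (g '' (E \ {(Term.var X, t)})) :=
          Set.mem_insert_of_mem _ ⟨e, he', rfl⟩
        have := hs _ hmem'
        have hr := hg e he'
        rw [replSome_iapply heq e.1 (g e).1 hr.1, replSome_iapply heq e.2 (g e).2 hr.2]
        exact this
end

section
/- If a finite equation set E is NSTO (no run of MMA on E performs action (6)), then every run of MMA⁻ on E is a run of MMA. -/
variable {F V : Type}

/-! ## Auxiliary lemmas for Statement 13 -/

section Stmt13Aux

variable {F V : Type}

theorem varIn_app' {v : V} {f : F} {ts : List (Term F V)} :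
    Term.VarIn v (Term.app f ts) ↔ ∃ t ∈ ts, Term.VarIn v t := by
  constructor
  · rintro (_ | ⟨hmem, hv⟩); exact ⟨_, hmem, hv⟩
  · rintro ⟨t, hmem, hv⟩; exact Term.VarIn.app hmem hv

theorem varIn_var' {v w : V} : Term.VarIn v (Term.var w : Term F V) ↔ w = v := by
  constructor
  · rintro (_ | _); rfl
  · rintro rfl; exact Term.VarIn.var

theorem subst_app' {σ : V → Term F V} {f : F} {ts : List (Term F V)} :
    (Term.app f ts).subst σ = Term.app f (ts.attach.map fun ⟨t, _⟩ => t.subst σ) := by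
  simp [Term.subst]

theorem varIn_subst' {σ : V → Term F V} {v : V} : ∀ {s : Term F V},
    Term.VarIn v (s.subst σ) ↔ ∃ w, Term.VarIn w s ∧ Term.VarIn v (σ w)
  | Term.var x => by
    simp only [Term.subst]
    constructor
    · intro h; exact ⟨x, Term.VarIn.var, h⟩
    · rintro ⟨w, hw, h⟩; rw [varIn_var'] at hw; subst hw; exact h
  | Term.app f ts => by
    rw [subst_app', varIn_app']
    constructor
    · rintro ⟨u, hu, hv⟩
      rw [List.mem_map] at hu
      obtain ⟨⟨t, ht⟩, -, rfl⟩ := hu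
      obtain ⟨w, hws, hv⟩ := varIn_subst'.mp hv
      exact ⟨w, Term.VarIn.app ht hws, hv⟩
    · rintro ⟨w, hws, hv⟩
      rw [varIn_app'] at hws
      obtain ⟨t, ht, hws⟩ := hws
      refine ⟨t.subst σ, ?_, varIn_subst'.mpr ⟨w, hws, hv⟩⟩
      rw [List.mem_map]
      exact ⟨⟨t, ht⟩, List.mem_attach _ _, rfl⟩

theorem varIn_subst1 [DecidableEq V] {X Y : V} {t s : Term F V}
    (h : Term.VarIn X (s.subst (subst1 Y t))) :
    (Term.VarIn X s ∧ X ≠ Y) ∨ (Term.VarIn Y s ∧ Term.VarIn X t) := by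
  obtain ⟨w, hws, hv⟩ := varIn_subst'.mp h
  by_cases hw : w = Y
  · subst hw
    simp only [subst1, if_pos rfl] at hv
    exact Or.inr ⟨hws, hv⟩
  · simp only [subst1, if_neg hw] at hv
    rw [varIn_var'] at hv
    subst hv
    exact Or.inl ⟨hws, hw⟩

theorem subst1_eq_var [DecidableEq V] {Y X : V} {t s : Term F V}
    (h : s.subst (subst1 Y t) = Term.var X) :
    (s = Term.var X ∧ X ≠ Y) ∨ (s = Term.var Y ∧ t = Term.var X) := by
  cases s with
  | var w =>
    simp only [Term.subst] at h
    by_cases hw : w = Y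
    · subst hw
      simp only [subst1, if_pos rfl] at h
      exact Or.inr ⟨rfl, h⟩
    · simp only [subst1, if_neg hw] at h
      injection h with h
      subst h
      exact Or.inl ⟨rfl, hw⟩
  | app f ts =>
    rw [subst_app'] at h
    exact absurd h (by simp)

/-- The invariant maintained by MMA⁻ runs: every variable `X` on which action (5)
has been performed occurs in the current equation set only as the left-hand side
of a unique equation. -/
structure MInv (E' : EqSet F V) (H : Set V) : Prop where
  a : ∀ X ∈ H, ∀ e ∈ E', ¬ Term.VarIn X e.2
  b : ∀ X ∈ H, ∀ e ∈ E', Term.VarIn X e.1 → e.1 = Term.var X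
  c : ∀ X ∈ H, ∀ e ∈ E', ∀ e' ∈ E', e.1 = Term.var X → e'.1 = Term.var X → e = e'

theorem mm_step_sound [DecidableEq V] {E' : EqSet F V} {H : Set V}
    {l : MLabel F V} {s' : MState F V}
    (hocc : ¬ OccApplicable E') (hinv : MInv E' H) (h : MMStepL l (E', H) s') :
    MMAStep E' s'.1 ∧ MInv s'.1 s'.2 := by
  cases h with
  | @decomp _ _ f ss ts hmem hlen =>
    have hz : ∀ e : Eqn F V, e ∈ ss.zip ts →
        ∀ X ∈ H, ¬ Term.VarIn X e.1 ∧ ¬ Term.VarIn X e.2 := by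
      intro e he X hX
      obtain ⟨h1, h2⟩ := List.of_mem_zip (l₁ := ss) (l₂ := ts) (a := e.1) (b := e.2) he
      constructor
      · intro hv
        have hb := hinv.b X hX _ hmem (Term.VarIn.app h1 hv)
        exact nomatch (show Term.app f ss = Term.var X from hb)
      · intro hv
        exact hinv.a X hX _ hmem (Term.VarIn.app h2 hv)
    refine ⟨MMAStep.decomp hmem hlen, ?_, ?_, ?_⟩
    · intro X hX e he
      rcases he with he | he
      · exact hinv.a X hX e he.1
      · exact (hz e he X hX).2
    · intro X hX e he hv
      rcases he with he | he
      · exact hinv.b X hX e he.1 hv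
      · exact absurd hv (hz e he X hX).1
    · intro X hX e he e' he' h1 h2
      rcases he with he | he
      · rcases he' with he' | he'
        · exact hinv.c X hX e he.1 e' he'.1 h1 h2
        · exact absurd (h2 ▸ Term.VarIn.var) (hz e' he' X hX).1
      · exact absurd (h1 ▸ Term.VarIn.var) (hz e he X hX).1
  | @del _ _ Y hmem =>
    refine ⟨MMAStep.del hmem, ?_, ?_, ?_⟩
    · exact fun X hX e he => hinv.a X hX e he.1
    · exact fun X hX e he => hinv.b X hX e he.1
    · exact fun X hX e he e' he' => hinv.c X hX e he.1 e' he'.1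
  | @orient _ _ Y u hmem hnv =>
    have hYne : ∀ X ∈ H, X ≠ Y := by
      intro X hX hXY
      subst hXY
      exact hinv.a X hX _ hmem Term.VarIn.var
    have hut : ∀ X ∈ H, ¬ Term.VarIn X u := by
      intro X hX hv
      have hb : u = Term.var X := hinv.b X hX _ hmem hv
      rw [hb] at hnv
      exact hnv trivial
    refine ⟨MMAStep.orient hmem hnv, ?_, ?_, ?_⟩
    · intro X hX e he
      rcases he with he | he
      · exact hinv.a X hX e he.1
      · rw [Set.mem_singleton_iff] at he
        subst he
        exact hut X hX
    · intro X hX e he hv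
      rcases he with he | he
      · exact hinv.b X hX e he.1 hv
      · rw [Set.mem_singleton_iff] at he
        subst he
        rw [varIn_var'] at hv
        exact absurd hv.symm (hYne X hX)
    · intro X hX e he e' he' h1 h2
      have hnotnew : ∀ e₀ : Eqn F V, e₀ ∈ ({(Term.var Y, u)} : EqSet F V) →
          e₀.1 = Term.var X → False := by
        intro e₀ he₀ h₀
        rw [Set.mem_singleton_iff] at he₀
        subst he₀
        injection h₀ with h₀
        exact hYne X hX h₀.symm
      rcases he with he | he
      · rcases he' with he' | he'
        · exact hinv.c X hX e he.1 e' he'.1 h1 h2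
        · exact absurd (hnotnew e' he' h2) not_false
      · exact absurd (hnotnew e he h1) not_false
  | @elim _ _ Y u hmem hne hocce =>
    have hYu : ¬ Term.VarIn Y u := fun hv => hocc ⟨Y, u, hmem, hne, hv⟩
    have hXt : ∀ X ∈ insert Y H, ¬ Term.VarIn X u := by
      intro X hX
      rcases Set.mem_insert_iff.mp hX with rfl | hX
      · exact hYu
      · exact hinv.a X hX _ hmem
    have hXH : ∀ X ∈ insert Y H, X ≠ Y → X ∈ H := by
      intro X hX hXY
      rcases Set.mem_insert_iff.mp hX with rfl | hX
      · exact absurd rfl hXY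
      · exact hX
    have hkey : ∀ X ∈ insert Y H, ∀ s : Term F V,
        Term.VarIn X (s.subst (subst1 Y u)) → Term.VarIn X s ∧ X ≠ Y := by
      intro X hX s hv
      rcases varIn_subst1 hv with ⟨h1, h2⟩ | ⟨h1, h2⟩
      · exact ⟨h1, h2⟩
      · exact absurd h2 (hXt X hX)
    refine ⟨MMAStep.elim hmem hne hYu hocce, ?_, ?_, ?_⟩
    · intro X hX e he
      rcases Set.mem_insert_iff.mp he with rfl | he
      · exact hXt X hX
      · obtain ⟨e₀, he₀, rfl⟩ := he
        intro hv
        obtain ⟨h1, h2⟩ := hkey X hX e₀.2 hv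
        exact hinv.a X (hXH X hX h2) e₀ he₀.1 h1
    · intro X hX e he hv
      rcases Set.mem_insert_iff.mp he with rfl | he
      · rw [varIn_var'] at hv
        subst hv
        rfl
      · obtain ⟨e₀, he₀, rfl⟩ := he
        obtain ⟨h1, h2⟩ := hkey X hX e₀.1 hv
        have hb := hinv.b X (hXH X hX h2) e₀ he₀.1 h1
        show e₀.1.subst (subst1 Y u) = Term.var X
        rw [hb]
        simp only [Term.subst, subst1, if_neg h2]
    · intro X hX e he e' he' h1 h2
      have hclass : ∀ e₁, e₁ ∈ insert (Term.var Y, u)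
            (Eqn.subst (subst1 Y u) '' (E' \ {(Term.var Y, u)})) →
          e₁.1 = Term.var X →
          (e₁ = (Term.var Y, u) ∧ X = Y) ∨
          (∃ e₀ ∈ E' \ {(Term.var Y, u)}, e₀.1 = Term.var X ∧ X ≠ Y ∧
            e₁ = Eqn.subst (subst1 Y u) e₀) := by
        intro e₁ he₁ hl
        rcases Set.mem_insert_iff.mp he₁ with rfl | he₁
        · injection hl with hl
          exact Or.inl ⟨rfl, hl.symm⟩
        · obtain ⟨e₀, he₀, rfl⟩ := he₁
          have hl' : e₀.1.subst (subst1 Y u) = Term.var X := hl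
          rcases subst1_eq_var hl' with ⟨h1, h2⟩ | ⟨h1, h2⟩
          · exact Or.inr ⟨e₀, he₀, h1, h2, rfl⟩
          · exact absurd (h2 ▸ Term.VarIn.var) (hXt X hX)
      rcases hclass e he h1 with ⟨rfl, hXY⟩ | ⟨e₀, he₀, hl₀, hXY, rfl⟩
      · rcases hclass e' he' h2 with ⟨rfl, _⟩ | ⟨e₀, he₀, hl₀, hXY', rfl⟩
        · rfl
        · exact absurd hXY hXY'
      · rcases hclass e' he' h2 with ⟨rfl, hXY'⟩ | ⟨e₁, he₁, hl₁, _, rfl⟩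
        · exact absurd hXY' hXY
        · rw [hinv.c X (hXH X hX hXY) e₀ he₀.1 e₁ he₁.1 hl₀ hl₁]
  | @elim' _ _ Y u g hmem hne hocce hYH hg =>
    obtain ⟨e', he'E, hne', hocc'⟩ := hocce
    rcases hocc' with hv | hv
    · have hb := hinv.b Y hYH e' he'E hv
      exact absurd (hinv.c Y hYH e' he'E (Term.var Y, u) hmem hb rfl) hne'
    · exact absurd hv (hinv.a Y hYH e' he'E)

theorem mm_reach_inv [DecidableEq V] {E : EqSet F V} (hnsto : NSTO E) :
    ∀ s' : MState F V, MMReach (E, ∅) s' → MMAReach E s'.1 ∧ MInv s'.1 s'.2 := by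
  intro s' h
  induction h with
  | refl =>
    exact ⟨Relation.ReflTransGen.refl,
      fun X hX => absurd hX (Set.notMem_empty X),
      fun X hX => absurd hX (Set.notMem_empty X),
      fun X hX => absurd hX (Set.notMem_empty X)⟩
  | tail _ hstep ih =>
    obtain ⟨l, hstep⟩ := hstep
    obtain ⟨hr, hinv⟩ := ih
    have hs := mm_step_sound (hnsto _ hr) hinv hstep
    exact ⟨Relation.ReflTransGen.tail hr hs.1, hs.2⟩

end Stmt13Aux

/-- If a finite equation set `E` is NSTO (no run of MMA on `E`
performs action (6)), then every run of MMA⁻ on `E` is a run of MMA: every MMA⁻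
step from any configuration reached from `(E, ∅)` is an MMA step. -/
theorem stmt13 {F V : Type} [DecidableEq V] (E : EqSet F V) (hfin : E.Finite)
    (hnsto : NSTO E) :
    ∀ (E' : EqSet F V) (H : Set V), MMReach (E, ∅) (E', H) →
      ∀ s' : MState F V, MMStep (E', H) s' → MMAStep E' s'.1 := by
  intro E' H hreach s' hstep
  obtain ⟨hr, hinv⟩ := mm_reach_inv hnsto (E', H) hreach
  obtain ⟨l, hstep⟩ := hstep
  exact (mm_step_sound (hnsto _ hr) hinv hstep).1
end

section
/- Every semi-solved finite equation set has an i-solution. -/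
variable {F V : Type}

namespace S14

variable {F V : Type}

open Classical in
/-- The (unique, by semi-solvedness) right-hand side for a variable, if any. -/
noncomputable def rhs (E : EqSet F V) (v : V) : Option (Term F V) :=
  if h : ∃ t, (Term.var v, t) ∈ E then some h.choose else none

theorem rhs_mem {E : EqSet F V} {v : V} {t : Term F V} (h : rhs E v = some t) :
    (Term.var v, t) ∈ E := by
  unfold rhs at h
  split_ifs at h with h1
  · obtain rfl : h1.choose = t := by injection h
    exact h1.choose_spec

theorem rhs_eq {E : EqSet F V} (hu : ∀ e ∈ E, ∀ e' ∈ E, e.1 = e'.1 → e = e')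
    {v : V} {t : Term F V} (hm : (Term.var v, t) ∈ E) : rhs E v = some t := by
  have h : ∃ t, (Term.var v, t) ∈ E := ⟨t, hm⟩
  unfold rhs
  rw [dif_pos h]
  have h2 := hu _ h.choose_spec _ hm rfl
  rw [Prod.mk.injEq] at h2
  rw [h2.2]

/-- Follow a variable–variable equation one step. -/
noncomputable def nextVar (E : EqSet F V) (v : V) : V :=
  match rhs E v with
  | some (Term.var w) => w
  | _ => v

noncomputable def chain (E : EqSet F V) (v : V) (n : ℕ) : V := (nextVar E)^[n] v

/-- `u` has a non-variable right-hand side. -/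
def P (E : EqSet F V) (u : V) : Prop := ∃ t, rhs E u = some t ∧ ¬ t.IsVar

def productive (E : EqSet F V) (v : V) : Prop := ∃ n, P E (chain E v n)

theorem nextVar_eq {E : EqSet F V} {v w : V} (h : rhs E v = some (Term.var w)) :
    nextVar E v = w := by unfold nextVar; rw [h]

theorem nextVar_fix {E : EqSet F V} {v : V} (h : ∀ w, rhs E v ≠ some (Term.var w)) :
    nextVar E v = v := by
  unfold nextVar
  rcases hr : rhs E v with _ | t
  · rfl
  · cases t with
    | var w => exact absurd hr (h w)
    | app f ts => rfl

theorem nextVar_fix_of_P {E : EqSet F V} {v : V} (h : P E v) : nextVar E v = v := by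
  obtain ⟨t, ht, hnv⟩ := h
  refine nextVar_fix fun w hw => ?_
  rw [ht] at hw
  obtain rfl : t = Term.var w := by injection hw
  exact hnv trivial

theorem chain_zero (E : EqSet F V) (v : V) : chain E v 0 = v := rfl

theorem chain_succ (E : EqSet F V) (v : V) (n : ℕ) :
    chain E v (n + 1) = nextVar E (chain E v n) := Function.iterate_succ_apply' _ _ _

theorem chain_succ' (E : EqSet F V) (v : V) (n : ℕ) :
    chain E v (n + 1) = chain E (nextVar E v) n := Function.iterate_succ_apply _ _ _

theorem chain_add (E : EqSet F V) (v : V) (k m : ℕ) :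
    chain E (chain E v k) m = chain E v (k + m) := by
  unfold chain
  rw [Nat.add_comm, Function.iterate_add_apply]

theorem chain_const {E : EqSet F V} {v : V} {k : ℕ} (h : P E (chain E v k)) :
    ∀ j, k ≤ j → chain E v j = chain E v k := by
  intro j hj
  induction j, hj using Nat.le_induction with
  | base => rfl
  | succ j hj ih => rw [chain_succ, ih, nextVar_fix_of_P h]

theorem productive_of_chain {E : EqSet F V} {v : V} {k : ℕ}
    (h : productive E (chain E v k)) : productive E v := by
  obtain ⟨m, hm⟩ := h
  rw [chain_add] at hm
  exact ⟨k + m, hm⟩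

/-- Variables occurring infinitely often in the chain of `v`. -/
def limSet (E : EqSet F V) (v : V) : Set V := {u | ∀ N, ∃ n, N ≤ n ∧ chain E v n = u}

theorem limSet_chain (E : EqSet F V) (v : V) (k : ℕ) :
    limSet E (chain E v k) = limSet E v := by
  ext u
  constructor
  · intro hu N
    obtain ⟨m, hm, he⟩ := hu N
    rw [chain_add] at he
    exact ⟨k + m, le_trans hm (Nat.le_add_left _ _), he⟩
  · intro hu N
    obtain ⟨n, hn, he⟩ := hu (N + k)
    refine ⟨n - k, ?_, ?_⟩
    · omega
    · rw [chain_add]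
      rwa [show k + (n - k) = n by omega]

theorem limSet_nonempty {E : EqSet F V} (hfin : E.Finite) (v : V) :
    (limSet E v).Nonempty := by
  classical
  set W : Set V := {w | ∃ u, (Term.var u, Term.var w) ∈ E} with hW
  have hWfin : W.Finite := by
    have hsub : W ⊆ ⋃ e ∈ E, {w | ∃ u, e = (Term.var u, Term.var w)} := by
      intro w ⟨u, hu⟩
      exact Set.mem_biUnion hu ⟨u, rfl⟩
    refine Set.Finite.subset (Set.Finite.biUnion hfin fun e _ => ?_) hsub
    refine Set.Subsingleton.finite fun a ha b hb => ?_
    obtain ⟨u1, h1⟩ := ha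
    obtain ⟨u2, h2⟩ := hb
    rw [h1] at h2
    simp only [Prod.mk.injEq, Term.var.injEq] at h2
    exact h2.2
  set S : Set V := insert v W with hS
  have hSfin : S.Finite := hWfin.insert v
  have hmem : ∀ n, chain E v n ∈ S := by
    intro n
    induction n with
    | zero => exact Set.mem_insert _ _
    | succ n ih =>
      rw [chain_succ]
      rcases hr : rhs E (chain E v n) with _ | t
      · rw [nextVar_fix fun w hw => by simp [hr] at hw]
        exact ih
      · cases t with
        | var w =>
          rw [nextVar_eq hr]
          exact Set.mem_insert_of_mem _ ⟨_, rhs_mem hr⟩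
        | app f ts =>
          rw [nextVar_fix fun w hw => by simp [hr] at hw]
          exact ih
  by_contra hne
  rw [Set.not_nonempty_iff_eq_empty] at hne
  have hfib : ∀ u ∈ S, {n | chain E v n = u}.Finite := by
    intro u hu
    by_contra hinf
    have hinf' : {n | chain E v n = u}.Infinite := hinf
    have : u ∈ limSet E v := by
      intro N
      obtain ⟨n, hn, hlt⟩ := hinf'.exists_gt N
      exact ⟨n, le_of_lt hlt, hn⟩
    rw [hne] at this
    exact this
  have : (Set.univ : Set ℕ).Finite := by
    refine Set.Finite.subset (Set.Finite.biUnion hSfin hfib) ?_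
    intro n _
    exact Set.mem_biUnion (hmem n) rfl
  exact Set.infinite_univ this

/-- Canonical representative of the limit cycle of `v`. -/
noncomputable def rep (E : EqSet F V) (v : V) : V :=
  haveI : Nonempty V := ⟨v⟩
  Classical.epsilon (· ∈ limSet E v)

theorem rep_mem {E : EqSet F V} (hfin : E.Finite) (v : V) : rep E v ∈ limSet E v := by
  haveI : Nonempty V := ⟨v⟩
  exact Classical.epsilon_spec (limSet_nonempty hfin v)

theorem rep_eq_of_limSet_eq {E : EqSet F V} {v w : V} (h : limSet E v = limSet E w) :
    rep E v = rep E w := by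
  haveI : Nonempty V := ⟨v⟩
  unfold rep
  rw [h]

open Classical in
/-- The collapsed substitution: productive variables get their stable non-variable
right-hand side; non-productive variables get the representative of their cycle. -/
noncomputable def sig (E : EqSet F V) (v : V) : Term F V :=
  if h : productive E v then (rhs E (chain E v (Nat.find h))).getD (Term.var v)
  else Term.var (rep E v)

theorem rep_fix {E : EqSet F V} (hfin : E.Finite) {v : V} (hnp : ¬ productive E v) :
    sig E (rep E v) = Term.var (rep E v) := by
  obtain ⟨n, _, hn⟩ := rep_mem hfin v 0
  have hnp' : ¬ productive E (rep E v) := by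
    rw [← hn]
    intro hc
    exact hnp (productive_of_chain hc)
  unfold sig
  rw [dif_neg hnp']
  congr 1
  refine rep_eq_of_limSet_eq ?_
  rw [← hn, limSet_chain]

theorem sig_app_of_productive {E : EqSet F V} {v : V} (h : productive E v) :
    ∃ f ts, sig E v = Term.app f ts := by
  classical
  have hspec := Nat.find_spec h
  obtain ⟨t, ht, hnv⟩ := hspec
  unfold sig
  rw [dif_pos h, ht]
  cases t with
  | var w => exact absurd trivial hnv
  | app f ts => exact ⟨f, ts, rfl⟩

theorem sig_shift {E : EqSet F V} {X Y : V} (h : rhs E X = some (Term.var Y)) :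
    sig E X = sig E Y := by
  classical
  have hnx : nextVar E X = Y := nextVar_eq h
  have hchain : ∀ n, chain E X (n + 1) = chain E Y n := by
    intro n
    rw [chain_succ', hnx]
  have hPX0 : ¬ P E (chain E X 0) := by
    rintro ⟨t, ht, hnv⟩
    rw [chain_zero, h] at ht
    obtain rfl : Term.var Y = t := by injection ht
    exact hnv trivial
  have hiff : productive E X ↔ productive E Y := by
    constructor
    · rintro ⟨n, hn⟩
      match n, hn with
      | 0, hn => exact absurd hn hPX0
      | m + 1, hn => exact ⟨m, by rwa [hchain] at hn⟩
    · rintro ⟨m, hm⟩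
      exact ⟨m + 1, by rwa [hchain]⟩
  by_cases hp : productive E X
  · have hpY : productive E Y := hiff.mp hp
    have hm1 : 1 ≤ Nat.find hp := by
      rcases Nat.eq_zero_or_pos (Nat.find hp) with h0 | h1
      · exact absurd (h0 ▸ Nat.find_spec hp) hPX0
      · exact h1
    have hle : Nat.find hpY ≤ Nat.find hp - 1 := by
      refine Nat.find_le ?_
      rw [← hchain]
      rw [show Nat.find hp - 1 + 1 = Nat.find hp by omega]
      exact Nat.find_spec hp
    have hpt : chain E Y (Nat.find hp - 1) = chain E Y (Nat.find hpY) :=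
      chain_const (Nat.find_spec hpY) _ hle
    have hpt2 : chain E X (Nat.find hp) = chain E Y (Nat.find hpY) := by
      rw [show Nat.find hp = Nat.find hp - 1 + 1 by omega, hchain, hpt]
    obtain ⟨t, ht, hnv⟩ := Nat.find_spec hp
    unfold sig
    rw [dif_pos hp, dif_pos hpY, ← hpt2, ht]
    rfl
  · have hpY : ¬ productive E Y := fun hc => hp (hiff.mpr hc)
    have hL : limSet E X = limSet E Y := by
      have := limSet_chain E X 1
      rw [show chain E X 1 = Y by rw [chain_succ', hnx]; rfl] at this
      exact this.symm
    unfold sig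
    rw [dif_neg hp, dif_neg hpY, rep_eq_of_limSet_eq hL]

/-! ### Iterated substitution and labels of finite terms -/

theorem subst_app (σ : Subst F V) (f : F) (ts : List (Term F V)) :
    Term.subst σ (Term.app f ts) = Term.app f (ts.map (Term.subst σ)) := by
  rw [Term.subst]
  congr 1
  rw [List.map_attach_eq_pmap]
  simp [List.pmap_eq_map]

theorem subst_var (σ : Subst F V) (v : V) : Term.subst σ (Term.var v) = σ v := by
  rw [Term.subst]

noncomputable def iter (E : EqSet F V) : ℕ → Term F V → Term F V
  | 0, t => t
  | n + 1, t => Term.subst (sig E) (iter E n t)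

theorem iter_succ' (E : EqSet F V) (n : ℕ) (t : Term F V) :
    iter E (n + 1) t = iter E n (Term.subst (sig E) t) := by
  induction n generalizing t with
  | zero => rfl
  | succ n ih =>
    show Term.subst (sig E) (iter E (n + 1) t) = _
    rw [ih, iter]

theorem iter_app (E : EqSet F V) (n : ℕ) (f : F) (ts : List (Term F V)) :
    iter E n (Term.app f ts) = Term.app f (ts.map (iter E n)) := by
  induction n with
  | zero => simp [iter]
  | succ n ih =>
    rw [iter, ih, subst_app, List.map_map]
    rfl

/-- The label of a finite term at a position. -/
def finLabel : List ℕ → Term F V → Option (F ⊕ V)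
  | [], Term.var w => some (Sum.inr w)
  | [], Term.app f _ => some (Sum.inl f)
  | _ :: _, Term.var _ => none
  | i :: p, Term.app _ ts => (ts[i]?).bind fun s => finLabel p s

/-- Stability to depth `d` under one application of `sig`. -/
def Stab (E : EqSet F V) : ℕ → Term F V → Prop
  | 0, _ => True
  | _ + 1, Term.var v => sig E v = Term.var v
  | d + 1, Term.app _ ts => ∀ s ∈ ts, Stab E d s

theorem stab_step {E : EqSet F V} (hfin : E.Finite) :
    ∀ (d : ℕ) (s : Term F V), Stab E d s → Stab E (d + 1) (Term.subst (sig E) s) := by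
  intro d
  induction d with
  | zero =>
    intro s _
    cases s with
    | var v =>
      rw [subst_var]
      by_cases hp : productive E v
      · obtain ⟨f, ts, hft⟩ := sig_app_of_productive hp
        rw [hft]
        intro s _
        trivial
      · rw [sig, dif_neg hp]
        exact rep_fix hfin hp
    | app f ts =>
      rw [subst_app]
      intro s _
      trivial
  | succ d ih =>
    intro s hs
    cases s with
    | var v =>
      have hv : sig E v = Term.var v := hs
      rw [subst_var, hv]
      exact hv
    | app f ts =>
      rw [subst_app]
      intro u hu
      rw [List.mem_map] at hu
      obtain ⟨s, hsm, rfl⟩ := hu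
      exact ih s (hs s hsm)

theorem stab_iter {E : EqSet F V} (hfin : E.Finite) (d : ℕ) (t : Term F V) :
    Stab E d (iter E d t) := by
  induction d with
  | zero => trivial
  | succ d ih => exact stab_step hfin d _ ih

theorem finLabel_stab {E : EqSet F V} :
    ∀ (p : List ℕ) (s : Term F V) (d : ℕ), Stab E d s → p.length < d →
      finLabel p (Term.subst (sig E) s) = finLabel p s := by
  intro p
  induction p with
  | nil =>
    intro s d hs hd
    obtain ⟨d, rfl⟩ : ∃ d', d = d' + 1 := ⟨d - 1, by omega⟩
    cases s with
    | var v =>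
      have hv : sig E v = Term.var v := hs
      rw [subst_var, hv]
    | app f ts => rw [subst_app]; rfl
  | cons i p ih =>
    intro s d hs hd
    obtain ⟨d, rfl⟩ : ∃ d', d = d' + 1 := ⟨d - 1, by omega⟩
    cases s with
    | var v =>
      have hv : sig E v = Term.var v := hs
      rw [subst_var, hv]
    | app f ts =>
      rw [subst_app]
      show ((ts.map (Term.subst (sig E)))[i]?).bind _ = (ts[i]?).bind _
      rw [List.getElem?_map]
      rcases hts : ts[i]? with _ | s
      · rfl
      · simp only [Option.map_some, Option.bind_some]
        refine ih _ d (hs s (List.mem_of_getElem? hts)) ?_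
        simp at hd
        omega

theorem stab_agree {E : EqSet F V} (hfin : E.Finite) (p : List ℕ) (t : Term F V) :
    ∀ n, p.length + 1 ≤ n → finLabel p (iter E n t) = finLabel p (iter E (p.length + 1) t) := by
  intro n hn
  induction n, hn using Nat.le_induction with
  | base => rfl
  | succ n hn ih =>
    rw [← ih]
    show finLabel p (Term.subst (sig E) (iter E n t)) = _
    exact finLabel_stab p _ n (stab_iter hfin n t) (by omega)

/-- The limit i-term obtained by infinitely iterating `sig` on `t`. -/
noncomputable def theta (E : EqSet F V) (t : Term F V) : PreTree F V :=
  fun p => finLabel p (iter E (p.length + 1) t)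

theorem theta_eq {E : EqSet F V} (hfin : E.Finite) (t : Term F V) (p : List ℕ) {n : ℕ}
    (hn : p.length + 1 ≤ n) : theta E t p = finLabel p (iter E n t) :=
  (stab_agree hfin p t n hn).symm

/-! ### `finLabel` structural lemmas -/

theorem finLabel_nil_var (v : V) : finLabel [] (Term.var v : Term F V) = some (Sum.inr v) := rfl

theorem finLabel_nil_app (f : F) (ts : List (Term F V)) :
    finLabel [] (Term.app f ts) = some (Sum.inl f) := rfl

theorem finLabel_cons_var (i : ℕ) (p : List ℕ) (v : V) :
    finLabel (i :: p) (Term.var v : Term F V) = none := rfl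

theorem finLabel_cons_app (i : ℕ) (p : List ℕ) (f : F) (ts : List (Term F V)) :
    finLabel (i :: p) (Term.app f ts) = (ts[i]?).bind fun s => finLabel p s := rfl

theorem finLabel_nil_isSome (s : Term F V) : (finLabel [] s).isSome := by
  cases s <;> rfl

theorem finLabel_prefix : ∀ (p : List ℕ) (i : ℕ) (s : Term F V),
    (finLabel (p ++ [i]) s).isSome → (finLabel p s).isSome := by
  intro p
  induction p with
  | nil => intro i s _; exact finLabel_nil_isSome s
  | cons j p ih =>
    intro i s hs
    rw [List.cons_append] at hs
    cases s with
    | var v => rw [finLabel_cons_var] at hs; exact absurd hs (by simp)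
    | app f ts =>
      rw [finLabel_cons_app] at hs
      rw [finLabel_cons_app]
      cases hts : ts[j]? with
      | none => rw [hts] at hs; exact absurd hs (by simp)
      | some s =>
        rw [hts] at hs
        simp only [Option.bind_some] at hs ⊢
        exact ih i s hs

theorem finLabel_sibling : ∀ (p : List ℕ) (i : ℕ) (s : Term F V),
    (finLabel (p ++ [i + 1]) s).isSome → (finLabel (p ++ [i]) s).isSome := by
  intro p
  induction p with
  | nil =>
    intro i s hs
    cases s with
    | var v => rw [List.nil_append, finLabel_cons_var] at hs; exact absurd hs (by simp)
    | app f ts =>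
      rw [List.nil_append, finLabel_cons_app] at hs
      rw [List.nil_append, finLabel_cons_app]
      cases hts : ts[i+1]? with
      | none => rw [hts] at hs; exact absurd hs (by simp)
      | some s =>
        have hlt : i < ts.length := by
          obtain ⟨h', -⟩ := List.getElem?_eq_some_iff.mp hts
          omega
        cases hts2 : ts[i]? with
        | none => rw [List.getElem?_eq_none_iff] at hts2; omega
        | some s2 =>
          simp only [Option.bind_some]
          exact finLabel_nil_isSome s2
  | cons j p ih =>
    intro i s hs
    rw [List.cons_append] at hs
    rw [List.cons_append]
    cases s with
    | var v => rw [finLabel_cons_var] at hs; exact absurd hs (by simp)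
    | app f ts =>
      rw [finLabel_cons_app] at hs
      rw [finLabel_cons_app]
      cases hts : ts[j]? with
      | none => rw [hts] at hs; exact absurd hs (by simp)
      | some s =>
        rw [hts] at hs
        simp only [Option.bind_some] at hs ⊢
        exact ih i s hs

theorem finLabel_var_leaf : ∀ (p : List ℕ) (s : Term F V) (v : V),
    finLabel p s = some (Sum.inr v) → ∀ i, finLabel (p ++ [i]) s = none := by
  intro p
  induction p with
  | nil =>
    intro s v hv i
    cases s with
    | var w => rfl
    | app f ts => rw [finLabel_nil_app] at hv; exact absurd hv (by simp)
  | cons j p ih =>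
    intro s v hv i
    rw [List.cons_append]
    cases s with
    | var w => rfl
    | app f ts =>
      rw [finLabel_cons_app] at hv
      rw [finLabel_cons_app]
      cases hts : ts[j]? with
      | none => rfl
      | some s =>
        rw [hts] at hv
        simp only [Option.bind_some] at hv ⊢
        exact ih s v hv i

theorem finLabel_fin_branch : ∀ (p : List ℕ) (s : Term F V),
    ∃ n, ∀ i, n ≤ i → finLabel (p ++ [i]) s = none := by
  intro p
  induction p with
  | nil =>
    intro s
    cases s with
    | var w => exact ⟨0, fun i _ => rfl⟩
    | app f ts =>
      refine ⟨ts.length, fun i hi => ?_⟩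
      rw [List.nil_append, finLabel_cons_app, List.getElem?_eq_none hi]
      rfl
  | cons j p ih =>
    intro s
    cases s with
    | var w => exact ⟨0, fun i _ => rfl⟩
    | app f ts =>
      cases hts : ts[j]? with
      | none =>
        refine ⟨0, fun i _ => ?_⟩
        rw [List.cons_append, finLabel_cons_app, hts]
        rfl
      | some s =>
        obtain ⟨n, hn⟩ := ih s
        refine ⟨n, fun i hi => ?_⟩
        rw [List.cons_append, finLabel_cons_app, hts]
        simp only [Option.bind_some]
        exact hn i hi

/-! ### `theta` is an i-term -/

theorem theta_isITerm {E : EqSet F V} (hfin : E.Finite) (t : Term F V) :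
    IsITerm (theta E t) where
  root := finLabel_nil_isSome _
  prefix_closed := by
    intro p i hs
    have h1 : theta E t (p ++ [i]) = finLabel (p ++ [i]) (iter E (p.length + 2) t) := by
      apply theta_eq hfin; simp
    have h2 : theta E t p = finLabel p (iter E (p.length + 2) t) :=
      theta_eq hfin t p (by omega)
    rw [h1] at hs
    rw [h2]
    exact finLabel_prefix p i _ hs
  sibling := by
    intro p i hs
    have h1 : theta E t (p ++ [i + 1]) = finLabel (p ++ [i + 1]) (iter E (p.length + 2) t) := by
      apply theta_eq hfin; simp
    have h2 : theta E t (p ++ [i]) = finLabel (p ++ [i]) (iter E (p.length + 2) t) := by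
      apply theta_eq hfin; simp
    rw [h1] at hs
    rw [h2]
    exact finLabel_sibling p i _ hs
  var_leaf := by
    intro p v hv i
    have h1 : theta E t (p ++ [i]) = finLabel (p ++ [i]) (iter E (p.length + 2) t) := by
      apply theta_eq hfin; simp
    have h2 : theta E t p = finLabel p (iter E (p.length + 2) t) :=
      theta_eq hfin t p (by omega)
    rw [h2] at hv
    rw [h1]
    exact finLabel_var_leaf p _ v hv i
  fin_branch := by
    intro p
    obtain ⟨n, hn⟩ := finLabel_fin_branch p (iter E (p.length + 2) t)
    refine ⟨n, fun i hi => ?_⟩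
    have h1 : theta E t (p ++ [i]) = finLabel (p ++ [i]) (iter E (p.length + 2) t) := by
      apply theta_eq hfin; simp
    rw [h1]
    exact hn i hi

/-! ### `iapply` of the limit substitution computes `theta` -/

noncomputable def thetaSub (E : EqSet F V) (hfin : E.Finite) : ISubst F V :=
  fun v => ⟨theta E (Term.var v), theta_isITerm hfin _⟩

theorem iapply_var (θ : ISubst F V) (v : V) :
    Term.iapply θ (Term.var v) = (θ v).1 := by rw [Term.iapply]

theorem attach_map_iapply (θ : ISubst F V) (ts : List (Term F V)) :
    ts.attach.map (fun x => Term.iapply θ x.1) = ts.map (Term.iapply θ) := by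
  rw [List.map_attach_eq_pmap]
  simp [List.pmap_eq_map]

theorem iapply_app_nil (θ : ISubst F V) (f : F) (ts : List (Term F V)) :
    Term.iapply θ (Term.app f ts) [] = some (Sum.inl f) := by
  rw [Term.iapply]

theorem iapply_app_cons (θ : ISubst F V) (f : F) (ts : List (Term F V)) (i : ℕ) (p : List ℕ) :
    Term.iapply θ (Term.app f ts) (i :: p) =
      match ((ts[i]?).map (Term.iapply θ)) with
      | some c => c p
      | none => none := by
  rw [Term.iapply]
  show (match (ts.attach.map fun x => Term.iapply θ x.1)[i]? with
    | some c => c p | none => none) = _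
  rw [attach_map_iapply, List.getElem?_map]

theorem iapply_eq {E : EqSet F V} (hfin : E.Finite) :
    ∀ (p : List ℕ) (s : Term F V), Term.iapply (thetaSub E hfin) s p = theta E s p := by
  intro p
  induction p with
  | nil =>
    intro s
    cases s with
    | var v => rw [iapply_var]; rfl
    | app f ts =>
      rw [iapply_app_nil]
      show _ = finLabel [] (iter E ((List.nil (α := ℕ)).length + 1) (Term.app f ts))
      rw [show (List.nil (α := ℕ)).length + 1 = 1 from rfl, iter_app, finLabel_nil_app]
  | cons i p ih =>
    intro s
    cases s with
    | var v => rw [iapply_var]; rfl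
    | app f ts =>
      rw [iapply_app_cons]
      have hrhs : theta E (Term.app f ts) (i :: p)
          = ((ts[i]?).map (iter E (p.length + 1 + 1))).bind fun s => finLabel p s := by
        show finLabel (i :: p) (iter E ((i :: p).length + 1) (Term.app f ts)) = _
        rw [show (i :: p).length + 1 = p.length + 1 + 1 by simp, iter_app, finLabel_cons_app,
          List.getElem?_map]
      rw [hrhs]
      cases hts : ts[i]? with
      | none => rfl
      | some s =>
        simp only [Option.map_some, Option.bind_some]
        rw [ih s]
        exact theta_eq hfin s p (by omega)

/-! ### `theta` solves the equations -/

theorem theta_var_sig {E : EqSet F V} (hfin : E.Finite) (X : V) (p : List ℕ) :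
    theta E (Term.var X) p = finLabel p (iter E (p.length + 1) (sig E X)) := by
  rw [theta_eq hfin (Term.var X) p (show p.length + 1 ≤ p.length + 2 by omega)]
  rw [show p.length + 2 = p.length + 1 + 1 from rfl, iter_succ', subst_var]

theorem theta_solves {E : EqSet F V} (hfin : E.Finite)
    (hu : ∀ e ∈ E, ∀ e' ∈ E, e.1 = e'.1 → e = e')
    {X : V} {t : Term F V} (hm : (Term.var X, t) ∈ E) :
    theta E (Term.var X) = theta E t := by
  classical
  have hr : rhs E X = some t := rhs_eq hu hm
  funext p
  rw [theta_var_sig hfin X p]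
  cases t with
  | var Y =>
    have hsig : sig E X = sig E Y := sig_shift hr
    rw [hsig, ← subst_var (sig E) Y, ← iter_succ']
    rw [theta_eq hfin (Term.var Y) p (show p.length + 1 ≤ p.length + 1 + 1 by omega)]
  | app f ts =>
    have hp : productive E X := ⟨0, Term.app f ts, by rw [chain_zero]; exact hr, fun h => h⟩
    have hfind : Nat.find hp = 0 := by
      rw [Nat.find_eq_zero hp]
      exact ⟨Term.app f ts, by rw [chain_zero]; exact hr, fun h => h⟩
    have hsig : sig E X = Term.app f ts := by
      rw [sig, dif_pos hp, hfind, chain_zero, hr]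
      rfl
    rw [hsig, theta]

end S14

/-- Every semi-solved finite equation set has an i-solution. -/
theorem stmt14 {F V : Type} (E : EqSet F V) (hfin : E.Finite) (h : SemiSolved E) :
    ∃ θ : ISubst F V, ISolution θ E := by
  obtain ⟨hvar, hu, -, -⟩ := h
  refine ⟨S14.thetaSub E hfin, ?_⟩
  intro e he
  obtain ⟨X, hX⟩ := hvar e he
  have h1 : Term.iapply (S14.thetaSub E hfin) e.1 = S14.theta E e.1 :=
    funext fun p => S14.iapply_eq hfin p e.1
  have h2 : Term.iapply (S14.thetaSub E hfin) e.2 = S14.theta E e.2 :=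
    funext fun p => S14.iapply_eq hfin p e.2
  rw [h1, h2, hX]
  have hm : (Term.var X, e.2) ∈ E := by
    have : e = (e.1, e.2) := rfl
    rw [this, hX] at he
    exact he
  exact S14.theta_solves hfin hu hm
end
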